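/- arXiv:2003.10475 — 12 statements merged into one kernel-verified Lean document; each statement's English description precedes it below -/
import Mathlib

section
/- For all positive integers N1, N2 and K, the K×K Toeplitz determinant of binomial coefficients satisfies det[ C(N1+N2, N2 + j - k) ]_{j,k=1}^K = [ G(N1+1) · G(N2+1) · G(N1+N2+K+1) · G(K+1) ] / [ G(N1+N2+1) · G(N1+K+1) · G(N2+K+1) ], where C(n,r) denotes the binomial coefficient (equal to 0 when r < 0 or r > n). -/
/-- Barnes G-function at positive integer arguments: `G(n) = ∏_{j=0}^{n-2} j!`. -/
def barnesG (n : ℕ) : ℕ := ∏ j ∈ Finset.range (n - 1), Nat.factorial j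

/-- Binomial coefficient `C(n, r)` with integer lower entry, equal to `0` when `r < 0`
(and, via `Nat.choose`, when `r > n`). -/
def chooseZ (n : ℕ) (r : ℤ) : ℕ := if 0 ≤ r then n.choose r.toNat else 0

open Nat Finset Matrix Polynomial

namespace ToeplitzBinomialAux

lemma chooseZ_coe (n s : ℕ) : chooseZ n (s : ℤ) = n.choose s := by
  simp [chooseZ]

/-- Vandermonde's convolution identity, cast to `ℚ`, as a sum over an initial range. -/
lemma nat_vand (a b Q : ℕ) :
    ∑ i ∈ range (Q + 1), (a.choose i : ℚ) * (b.choose (Q - i) : ℚ) = ((a + b).choose Q : ℚ) := by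
  rw [Nat.add_choose_eq]
  push_cast
  rw [Finset.Nat.sum_antidiagonal_eq_sum_range_succ
    (fun x y => (a.choose x : ℚ) * (b.choose y : ℚ))]

/-- Vandermonde convolution with an integer lower index. -/
lemma vand1 (a b L : ℕ) (hL : a < L) (q : ℤ) :
    ∑ i ∈ range L, (a.choose i : ℚ) * (chooseZ b (q - i) : ℚ) = (chooseZ (a + b) q : ℚ) := by
  rcases lt_or_ge q 0 with hq | hq
  · rw [Finset.sum_eq_zero, chooseZ, if_neg (by omega)]
    · simp
    intro i _
    rw [chooseZ, if_neg (by omega)]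
    simp
  · obtain ⟨Q, rfl⟩ : ∃ Q : ℕ, q = Q := ⟨q.toNat, (Int.toNat_of_nonneg hq).symm⟩
    have key : ∀ i : ℕ, (chooseZ b ((Q : ℤ) - i) : ℚ)
        = if i ≤ Q then (b.choose (Q - i) : ℚ) else 0 := by
      intro i
      by_cases h : i ≤ Q
      · rw [if_pos h, chooseZ, if_pos (by omega)]
        congr 2
        omega
      · rw [if_neg h, chooseZ, if_neg (by omega)]
        simp
    have hsum : ∀ T : ℕ, a < T → Q < T →
        ∑ i ∈ range T, (a.choose i : ℚ) * (if i ≤ Q then (b.choose (Q - i) : ℚ) else 0)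
          = ∑ i ∈ range (Q + 1), (a.choose i : ℚ) * (b.choose (Q - i) : ℚ) := by
      intro T hT hQT
      rw [← Finset.sum_subset (Finset.range_subset_range.mpr (by omega : Q + 1 ≤ T))]
      · exact Finset.sum_congr rfl fun i hi => by
          rw [if_pos (by simpa using Nat.lt_succ_iff.mp (mem_range.mp hi))]
      · intro i _ hi
        rw [if_neg (by simp at hi; omega)]
        simp
    calc ∑ i ∈ range L, (a.choose i : ℚ) * (chooseZ b ((Q : ℤ) - i) : ℚ)
        = ∑ i ∈ range L, (a.choose i : ℚ) * (if i ≤ Q then (b.choose (Q - i) : ℚ) else 0) := by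
          exact Finset.sum_congr rfl fun i _ => by rw [key]
      _ = ∑ i ∈ range (L + Q + 1), (a.choose i : ℚ) *
            (if i ≤ Q then (b.choose (Q - i) : ℚ) else 0) := by
          apply Finset.sum_subset (Finset.range_subset_range.mpr (by omega))
          intro i _ hi
          rw [Nat.choose_eq_zero_of_lt (by simp at hi; omega)]
          simp
      _ = ∑ i ∈ range (Q + 1), (a.choose i : ℚ) * (b.choose (Q - i) : ℚ) :=
          hsum _ (by omega) (by omega)
      _ = ((a + b).choose Q : ℚ) := nat_vand a b Q
      _ = (chooseZ (a + b) (Q : ℤ) : ℚ) := by rw [chooseZ_coe]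

/-- The "reversed" Vandermonde convolution. -/
lemma vand2 (a b m L : ℕ) (hL : a < L) :
    ∑ i ∈ range L, (a.choose i : ℚ) * (b.choose (m + i) : ℚ) = ((a + b).choose (m + a) : ℚ) := by
  have h1 : ∑ i ∈ range L, (a.choose i : ℚ) * (b.choose (m + i) : ℚ)
      = ∑ i ∈ range (a + 1), (a.choose i : ℚ) * (b.choose (m + i) : ℚ) := by
    symm
    apply Finset.sum_subset (Finset.range_subset_range.mpr (by omega))
    intro i _ hi
    rw [Nat.choose_eq_zero_of_lt (by simp at hi; omega)]
    simp
  rw [h1, ← Finset.sum_range_reflect]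
  have h2 : ∀ i ∈ range (a + 1),
      (a.choose (a + 1 - 1 - i) : ℚ) * (b.choose (m + (a + 1 - 1 - i)) : ℚ)
        = (a.choose i : ℚ) * (b.choose ((m + a) - i) : ℚ) := by
    intro i hi
    have hia : i ≤ a := by simpa using Nat.lt_succ_iff.mp (mem_range.mp hi)
    have e1 : a + 1 - 1 - i = a - i := by omega
    rw [e1, Nat.choose_symm hia]
    congr 3
    omega
  rw [Finset.sum_congr rfl h2]
  rw [← nat_vand a b (m + a)]
  apply Finset.sum_subset (Finset.range_subset_range.mpr (by omega))
  intro i _ hi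
  rw [Nat.choose_eq_zero_of_lt (by simp at hi; omega)]
  simp

/-- Multiplying the Toeplitz matrix by unit-triangular Pascal matrices on both sides turns it
into the matrix `C(N1+N2+j+k, N2+j)`, so the two determinants agree. -/
lemma step1 (N1 N2 K : ℕ) :
    (Matrix.of fun j k : Fin K =>
        (chooseZ (N1 + N2) ((N2 : ℤ) + (j : ℤ) - (k : ℤ)) : ℚ)).det
      = (Matrix.of fun j k : Fin K =>
          ((N1 + N2 + j.val + k.val).choose (N2 + j.val) : ℚ)).det := by
  set M : Matrix (Fin K) (Fin K) ℚ := Matrix.of fun j k : Fin K =>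
    (chooseZ (N1 + N2) ((N2 : ℤ) + (j : ℤ) - (k : ℤ)) : ℚ) with hM
  set Q : Matrix (Fin K) (Fin K) ℚ :=
    Matrix.of fun j j1 : Fin K => ((j.val).choose j1.val : ℚ) with hQ
  set P : Matrix (Fin K) (Fin K) ℚ :=
    Matrix.of fun k1 k : Fin K => ((k.val).choose k1.val : ℚ) with hP
  have hMP : ∀ j k : Fin K, (M * P) j k = ((N1 + N2 + k.val).choose (N2 + j.val) : ℚ) := by
    intro j k
    rw [Matrix.mul_apply]
    have : ∀ k1 : Fin K, M j k1 * P k1 k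
        = ((k.val).choose k1.val : ℚ) *
          (chooseZ (N1 + N2) (((N2 + j.val : ℕ) : ℤ) - (k1.val : ℕ)) : ℚ) := by
      intro k1
      rw [hM, hP]
      simp only [Matrix.of_apply]
      have harg : ((N2 : ℤ) + (j : ℤ) - (k1 : ℤ))
          = ((N2 + j.val : ℕ) : ℤ) - (k1.val : ℕ) := by push_cast; ring
      rw [harg, mul_comm]
    rw [Finset.sum_congr rfl fun k1 _ => this k1]
    rw [Fin.sum_univ_eq_sum_range (fun i => ((k.val).choose i : ℚ) *
      (chooseZ (N1 + N2) (((N2 + j.val : ℕ) : ℤ) - (i : ℕ)) : ℚ))]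
    rw [vand1 k.val (N1 + N2) K k.isLt]
    rw [chooseZ_coe]
    norm_cast
    congr 1
    omega
  have hQMP : Q * M * P = Matrix.of fun j k : Fin K =>
      ((N1 + N2 + j.val + k.val).choose (N2 + j.val) : ℚ) := by
    rw [mul_assoc]
    ext j k
    rw [Matrix.mul_apply]
    have : ∀ j1 : Fin K, Q j j1 * (M * P) j1 k
        = ((j.val).choose j1.val : ℚ) * ((N1 + N2 + k.val).choose (N2 + j1.val) : ℚ) := by
      intro j1
      rw [hMP, hQ]
      simp
    rw [Finset.sum_congr rfl fun j1 _ => this j1]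
    rw [Fin.sum_univ_eq_sum_range (fun i => ((j.val).choose i : ℚ) *
      ((N1 + N2 + k.val).choose (N2 + i) : ℚ))]
    rw [vand2 j.val (N1 + N2 + k.val) N2 K j.isLt]
    simp only [Matrix.of_apply]
    norm_cast
    congr 1
    omega
  have hdetQ : Q.det = 1 := by
    rw [Matrix.det_of_lowerTriangular Q]
    · rw [Finset.prod_eq_one]
      intro j _
      simp [hQ]
    · intro i j hij
      simp only [hQ, Matrix.of_apply]
      rw [Nat.choose_eq_zero_of_lt]
      · simp
      · exact hij
  have hdetP : P.det = 1 := by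
    rw [Matrix.det_of_upperTriangular]
    · rw [Finset.prod_eq_one]
      intro j _
      simp [hP]
    · intro i j hij
      simp only [hP, Matrix.of_apply]
      rw [Nat.choose_eq_zero_of_lt]
      · simp
      · exact hij
  have := congrArg Matrix.det hQMP
  rw [Matrix.det_mul, Matrix.det_mul, hdetQ, hdetP, one_mul, mul_one] at this
  rw [this]

lemma hfact (t : ℕ) : ∀ k : ℕ, (t + k)! = t ! * ∏ i ∈ range k, (t + i + 1)
  | 0 => by simp
  | (k + 1) => by
      rw [prod_range_succ, ← mul_assoc, ← hfact t k, ← Nat.add_assoc, Nat.factorial_succ]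
      ring

/-- Evaluation of `det [C(N1+N2+j+k, N2+j)]` by scaling rows/columns and reducing to a
Vandermonde determinant. -/
lemma step2 (N1 N2 K : ℕ) (hK : 0 < K) :
    (Matrix.of fun j k : Fin K =>
        ((N1 + N2 + j.val + k.val).choose (N2 + j.val) : ℚ)).det
      = (∏ j ∈ range K, (((N1 + N2 + j)! : ℚ) / ((N2 + j)! : ℚ)))
        * (∏ j ∈ range K, ((j)! : ℚ))
        * (∏ j ∈ range K, (((N1 + j)! : ℚ))⁻¹) := by
  set v : Fin K → ℚ := fun j => ((N1 + N2 + j.val : ℕ) : ℚ) with hv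
  set V : Matrix (Fin K) (Fin K) ℚ :=
    Matrix.of fun j k : Fin K => ∏ i ∈ range k.val, (v j + i + 1) with hV
  have hRD : (Matrix.of fun j k : Fin K =>
        ((N1 + N2 + j.val + k.val).choose (N2 + j.val) : ℚ))
      = Matrix.diagonal (fun j : Fin K => ((N1 + N2 + j.val)! : ℚ) / ((N2 + j.val)! : ℚ)) * V
        * Matrix.diagonal (fun k : Fin K => (((N1 + k.val)! : ℚ))⁻¹) := by
    ext j k
    simp only [Matrix.mul_diagonal, Matrix.diagonal_mul, Matrix.of_apply, hV, hv]
    rw [Nat.cast_choose ℚ (by omega : N2 + j.val ≤ N1 + N2 + j.val + k.val)]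
    have e1 : N1 + N2 + j.val + k.val - (N2 + j.val) = N1 + k.val := by omega
    rw [e1]
    have e2 : (N1 + N2 + j.val + k.val)! = (N1 + N2 + j.val)! * ∏ i ∈ range k.val,
        (N1 + N2 + j.val + i + 1) := hfact _ _
    rw [e2]
    push_cast
    have h1 : ((N2 + j.val)! : ℚ) ≠ 0 := Nat.cast_ne_zero.mpr (Nat.factorial_ne_zero _)
    have h2 : ((N1 + k.val)! : ℚ) ≠ 0 := Nat.cast_ne_zero.mpr (Nat.factorial_ne_zero _)
    field_simp
  rw [hRD, Matrix.det_mul, Matrix.det_mul, Matrix.det_diagonal, Matrix.det_diagonal]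
  have hdetV : V.det = ∏ j ∈ range K, ((j)! : ℚ) := by
    have hdeg : ∀ i : Fin K,
        (∏ t ∈ range i.val, (X + C ((t : ℚ) + 1))).natDegree = (i : ℕ) := by
      intro i
      rw [Polynomial.natDegree_prod_of_monic _ _ (fun t _ => monic_X_add_C _)]
      simp only [Polynomial.natDegree_X_add_C]
      simp
    have hmon : ∀ i : Fin K, (∏ t ∈ range i.val, (X + C ((t : ℚ) + 1))).Monic :=
      fun i => monic_prod_of_monic _ _ (fun t _ => monic_X_add_C _)
    have heval : V = Matrix.of fun j k : Fin K =>
        (∏ t ∈ range k.val, (X + C ((t : ℚ) + 1))).eval (v j) := by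
      ext j k
      simp only [hV, Matrix.of_apply, Polynomial.eval_prod, Polynomial.eval_add,
        Polynomial.eval_X, Polynomial.eval_C]
      exact Finset.prod_congr rfl fun t _ => by ring
    rw [heval, ← Matrix.det_eval_matrixOfPolynomials_eq_det_vandermonde v _ hdeg hmon]
    have hv2 : v = fun i : Fin K => (i : ℚ) + ((N1 + N2 : ℕ) : ℚ) := by
      funext i
      simp only [hv]
      push_cast
      ring
    rw [hv2, Matrix.det_vandermonde_add]
    obtain ⟨K', rfl⟩ : ∃ K', K = K' + 1 := ⟨K - 1, by omega⟩
    rw [Matrix.det_vandermonde_id_eq_superFactorial]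
    rw [← Nat.prod_range_succ_factorial]
    push_cast
    rfl
  rw [hdetV]
  rw [Fin.prod_univ_eq_prod_range
      (fun j => ((N1 + N2 + j)! : ℚ) / ((N2 + j)! : ℚ)) K,
    Fin.prod_univ_eq_prod_range (fun j => (((N1 + j)! : ℚ))⁻¹) K]

lemma barnesG_cast_ne_zero (m : ℕ) : (barnesG m : ℚ) ≠ 0 := by
  have : 0 < barnesG m := Finset.prod_pos fun j _ => Nat.factorial_pos j
  exact_mod_cast this.ne'

lemma barnesG_split (t K : ℕ) :
    (barnesG (t + K + 1) : ℚ) = (barnesG (t + 1) : ℚ) * ∏ j ∈ range K, ((t + j)! : ℚ) := by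
  unfold barnesG
  simp only [Nat.add_sub_cancel]
  push_cast
  rw [Finset.prod_range_add]

/-- The product formula rewritten in terms of the Barnes G-function. -/
lemma step3 (N1 N2 K : ℕ) :
    (∏ j ∈ range K, (((N1 + N2 + j)! : ℚ) / ((N2 + j)! : ℚ)))
      * (∏ j ∈ range K, ((j)! : ℚ))
      * (∏ j ∈ range K, (((N1 + j)! : ℚ))⁻¹)
    = (barnesG (N1 + 1) * barnesG (N2 + 1) * barnesG (N1 + N2 + K + 1) * barnesG (K + 1) : ℚ)
        / (barnesG (N1 + N2 + 1) * barnesG (N1 + K + 1) * barnesG (N2 + K + 1)) := by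
  have hG : ∀ m : ℕ, (barnesG m : ℚ) ≠ 0 := barnesG_cast_ne_zero
  have hKfac : (barnesG (K + 1) : ℚ) = ∏ j ∈ range K, ((j)! : ℚ) := by
    unfold barnesG; simp only [Nat.add_sub_cancel]; push_cast; rfl
  have hprodne : ∀ t : ℕ, (∏ j ∈ range K, ((t + j)! : ℚ)) ≠ 0 := by
    intro t
    exact Finset.prod_ne_zero_iff.mpr fun j _ =>
      Nat.cast_ne_zero.mpr (Nat.factorial_ne_zero _)
  rw [barnesG_split (N1 + N2) K, barnesG_split N1 K, barnesG_split N2 K, hKfac,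
    Finset.prod_div_distrib]
  have h1 := hprodne (N1 + N2)
  have h2 := hprodne N1
  have h3 := hprodne N2
  have h4 := hG (N1 + 1)
  have h5 := hG (N2 + 1)
  have h6 := hG (N1 + N2 + 1)
  rw [Finset.prod_inv_distrib]
  field_simp

end ToeplitzBinomialAux

/-- Böttcher–Silbermann evaluation of the Toeplitz determinant of binomial coefficients:
`det[ C(N1+N2, N2 + j - k) ]_{j,k=1}^K
  = G(N1+1) G(N2+1) G(N1+N2+K+1) G(K+1) / ( G(N1+N2+1) G(N1+K+1) G(N2+K+1) )`. -/
theorem toeplitz_binomial_det (N1 N2 K : ℕ) (hN1 : 0 < N1) (hN2 : 0 < N2) (hK : 0 < K) :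
    Matrix.det (Matrix.of fun j k : Fin K =>
        (chooseZ (N1 + N2) ((N2 : ℤ) + (j : ℤ) - (k : ℤ)) : ℚ))
      = (barnesG (N1 + 1) * barnesG (N2 + 1) * barnesG (N1 + N2 + K + 1) * barnesG (K + 1) : ℚ)
        / (barnesG (N1 + N2 + 1) * barnesG (N1 + K + 1) * barnesG (N2 + K + 1)) := by
  rw [ToeplitzBinomialAux.step1 N1 N2 K, ToeplitzBinomialAux.step2 N1 N2 K hK,
    ToeplitzBinomialAux.step3 N1 N2 K]
end

section
/- Let K be a positive integer and let σ : ℝ → ℂ be a 2π-periodic integrable function satisfying σ(θ) = σ(-θ), with Fourier coefficients σ_j = (1/2π) ∫_{-π}^{π} σ(θ) e^{-i j θ} dθ. Write f for the function on [-1,1] defined by f(cos θ) = σ(θ), and for a weight w on (-1,1) let D_K(w) = det( ∫_{-1}^{1} x^{j+k-2} w(x) dx )_{j,k=1}^{K}. Then: (i) (1/2) det( σ_{j-k} + σ_{j+k-2} )_{j,k=1}^{K} = (2^{K²-K+1} / (2π)^K) · D_K( f(x) / √(1-x²) ); and (ii) det( σ_{j-k} - σ_{j+k} )_{j,k=1}^{K}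 = (2^{K²+K} / (2π)^K) · D_K( f(x) · √(1-x²) ). -/
open MeasureTheory

/-- Fourier coefficients `σ_j = (1/2π) ∫_{-π}^{π} σ(θ) e^{-ijθ} dθ` of a symbol. -/
noncomputable def fourierCoeffZ (σ : ℝ → ℂ) (n : ℤ) : ℂ :=
  (1 / (2 * (Real.pi : ℂ))) * ∫ θ in (-Real.pi)..Real.pi,
    σ θ * Complex.exp (-Complex.I * (n : ℂ) * (θ : ℂ))

/-- Hankel determinant of moments of a weight `w` on `(-1, 1)`:
`D_K(w) = det( ∫_{-1}^1 x^{j+k-2} w(x) dx )_{j,k=1}^K`. -/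
noncomputable def hankelDet (K : ℕ) (w : ℝ → ℂ) : ℂ :=
  Matrix.det (Matrix.of fun j k : Fin K =>
    ∫ x in (-1 : ℝ)..1, (x : ℂ) ^ ((j : ℕ) + (k : ℕ)) * w x)

set_option maxHeartbeats 1600000

namespace DIKAux

open Polynomial Polynomial.Chebyshev intervalIntegral

/-! ### Chebyshev coefficient facts -/

lemma coeff_two_X_mul (p : ℂ[X]) (m : ℕ) : (2 * X * p).coeff (m + 1) = 2 * p.coeff m := by
  rw [mul_assoc, show ((2 : ℂ[X]) * (X * p)) = X * (2 * p) by ring, Polynomial.coeff_X_mul]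
  simp

lemma T_aux : ∀ n : ℕ, (∀ m : ℕ, n < m → (T ℂ n).coeff m = 0) ∧ (T ℂ n).coeff n = 2 ^ (n - 1) := by
  intro n
  induction n using Nat.strong_induction_on with
  | _ n ih =>
    match n with
    | 0 =>
      refine ⟨fun m hm => ?_, by simp⟩
      rw [show ((0:ℕ):ℤ) = 0 from rfl, T_zero, Polynomial.coeff_one, if_neg (by omega)]
    | 1 =>
      refine ⟨fun m hm => ?_, by simp⟩
      rw [show ((1:ℕ):ℤ) = 1 from rfl, T_one, Polynomial.coeff_X, if_neg (by omega)]
    | (k+2) =>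
      obtain ⟨h1z, h1d⟩ := ih (k+1) (by omega)
      obtain ⟨h2z, h2d⟩ := ih k (by omega)
      push_cast at h1z h1d h2z h2d ⊢
      have hT : T ℂ ((k : ℤ) + 2) = 2 * X * T ℂ ((k : ℤ) + 1) - T ℂ (k : ℤ) := T_add_two ℂ (k : ℤ)
      constructor
      · intro m hm
        obtain ⟨m', rfl⟩ : ∃ m', m = m' + 1 := ⟨m - 1, by omega⟩
        rw [hT, Polynomial.coeff_sub, coeff_two_X_mul, h1z m' (by omega), h2z (m'+1) (by omega)]
        ring
      · rw [hT, Polynomial.coeff_sub, show k+2 = (k+1)+1 from rfl, coeff_two_X_mul, h1d,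
          h2z (k+2) (by omega)]
        simp [pow_succ]
        ring

lemma U_aux : ∀ n : ℕ, (∀ m : ℕ, n < m → (U ℂ n).coeff m = 0) ∧ (U ℂ n).coeff n = 2 ^ n := by
  intro n
  induction n using Nat.strong_induction_on with
  | _ n ih =>
    match n with
    | 0 =>
      refine ⟨fun m hm => ?_, by simp⟩
      rw [show ((0:ℕ):ℤ) = 0 from rfl, U_zero, Polynomial.coeff_one, if_neg (by omega)]
    | 1 =>
      refine ⟨fun m hm => ?_, ?_⟩
      · obtain ⟨m', rfl⟩ : ∃ m', m = m' + 1 := ⟨m - 1, by omega⟩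
        rw [show ((1:ℕ):ℤ) = 1 from rfl, U_one, show ((2 : ℂ[X]) * X) = 2 * X * 1 by ring,
          coeff_two_X_mul, Polynomial.coeff_one, if_neg (by omega), mul_zero]
      · rw [show ((1:ℕ):ℤ) = 1 from rfl, U_one, show ((2 : ℂ[X]) * X) = 2 * X * 1 by ring,
          coeff_two_X_mul, Polynomial.coeff_one, if_pos rfl]
        norm_num
    | (k+2) =>
      obtain ⟨h1z, h1d⟩ := ih (k+1) (by omega)
      obtain ⟨h2z, h2d⟩ := ih k (by omega)
      push_cast at h1z h1d h2z h2d ⊢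
      have hT : U ℂ ((k : ℤ) + 2) = 2 * X * U ℂ ((k : ℤ) + 1) - U ℂ (k : ℤ) := U_add_two ℂ (k : ℤ)
      constructor
      · intro m hm
        obtain ⟨m', rfl⟩ : ∃ m', m = m' + 1 := ⟨m - 1, by omega⟩
        rw [hT, Polynomial.coeff_sub, coeff_two_X_mul, h1z m' (by omega), h2z (m'+1) (by omega)]
        ring
      · rw [hT, Polynomial.coeff_sub, show k+2 = (k+1)+1 from rfl, coeff_two_X_mul, h1d,
          h2z (k+2) (by omega)]
        simp [pow_succ]
        ring

lemma T_natDegree_lt {n K : ℕ} (h : n < K) : (T ℂ n).natDegree < K :=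
  lt_of_le_of_lt (Polynomial.natDegree_le_iff_coeff_eq_zero.mpr (fun m hm => (T_aux n).1 m hm)) h

lemma U_natDegree_lt {n K : ℕ} (h : n < K) : (U ℂ n).natDegree < K :=
  lt_of_le_of_lt (Polynomial.natDegree_le_iff_coeff_eq_zero.mpr (fun m hm => (U_aux n).1 m hm)) h

/-! ### Substitution `x = cos θ` -/

lemma subst_cos (g : ℝ → ℂ) :
    (∫ x in (-1:ℝ)..1, g x) = ∫ θ in (0:ℝ)..Real.pi, Real.sin θ • g (Real.cos θ) := by
  have h1 : (∫ x in (-1:ℝ)..1, g x) = ∫ x in Set.Icc (-1:ℝ) 1, g x := by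
    rw [intervalIntegral.integral_of_le (by norm_num), ← MeasureTheory.integral_Icc_eq_integral_Ioc]
  have h2 : (∫ θ in (0:ℝ)..Real.pi, Real.sin θ • g (Real.cos θ))
      = ∫ θ in Set.Icc (0:ℝ) Real.pi, Real.sin θ • g (Real.cos θ) := by
    rw [intervalIntegral.integral_of_le Real.pi_pos.le,
      ← MeasureTheory.integral_Icc_eq_integral_Ioc]
  rw [h1, h2, ← Real.bijOn_cos.image_eq,
    MeasureTheory.integral_image_eq_integral_abs_deriv_smul measurableSet_Icc
      (fun x _ => (Real.hasDerivAt_cos x).hasDerivWithinAt) Real.injOn_cos g]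
  refine MeasureTheory.setIntegral_congr_fun measurableSet_Icc (fun θ hθ => ?_)
  rw [abs_neg, abs_of_nonneg (Real.sin_nonneg_of_nonneg_of_le_pi hθ.1 hθ.2)]

lemma mom1 (σ f : ℝ → ℂ) (hf : ∀ θ : ℝ, f (Real.cos θ) = σ θ) (n : ℕ) :
    (∫ x in (-1:ℝ)..1, (x:ℂ)^n * (f x / ((Real.sqrt (1-x^2) : ℝ) : ℂ)))
      = ∫ θ in (0:ℝ)..Real.pi, σ θ * (Real.cos θ : ℂ)^n := by
  rw [subst_cos]
  rw [intervalIntegral.integral_of_le Real.pi_pos.le,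
    intervalIntegral.integral_of_le Real.pi_pos.le,
    MeasureTheory.integral_Ioc_eq_integral_Ioo, MeasureTheory.integral_Ioc_eq_integral_Ioo]
  refine MeasureTheory.setIntegral_congr_fun measurableSet_Ioo (fun θ hθ => ?_)
  have hs : 0 < Real.sin θ := Real.sin_pos_of_pos_of_lt_pi hθ.1 hθ.2
  have hsq : Real.sqrt (1 - Real.cos θ ^ 2) = Real.sin θ := by
    rw [← Real.sin_sq, Real.sqrt_sq hs.le]
  have hz : ((Real.sin θ : ℝ) : ℂ) ≠ 0 := by exact_mod_cast hs.ne'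
  rw [hsq, hf θ, Complex.real_smul]
  have hd : σ θ / ((Real.sin θ : ℝ) : ℂ) * ((Real.sin θ : ℝ) : ℂ) = σ θ := div_mul_cancel₀ _ hz
  linear_combination ((Real.cos θ : ℝ) : ℂ)^n * hd

lemma mom2 (σ f : ℝ → ℂ) (hf : ∀ θ : ℝ, f (Real.cos θ) = σ θ) (n : ℕ) :
    (∫ x in (-1:ℝ)..1, (x:ℂ)^n * (f x * ((Real.sqrt (1-x^2) : ℝ) : ℂ)))
      = ∫ θ in (0:ℝ)..Real.pi, σ θ * (Real.sin θ : ℂ)^2 * (Real.cos θ : ℂ)^n := by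
  rw [subst_cos]
  rw [intervalIntegral.integral_of_le Real.pi_pos.le,
    intervalIntegral.integral_of_le Real.pi_pos.le,
    MeasureTheory.integral_Ioc_eq_integral_Ioo, MeasureTheory.integral_Ioc_eq_integral_Ioo]
  refine MeasureTheory.setIntegral_congr_fun measurableSet_Ioo (fun θ hθ => ?_)
  have hs : 0 < Real.sin θ := Real.sin_pos_of_pos_of_lt_pi hθ.1 hθ.2
  have hsq : Real.sqrt (1 - Real.cos θ ^ 2) = Real.sin θ := by
    rw [← Real.sin_sq, Real.sqrt_sq hs.le]
  rw [hsq, hf θ, Complex.real_smul]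
  ring

/-! ### Integrability and the Fourier coefficients as cosine integrals -/

lemma sigInt' {σ : ℝ → ℂ} (hint : IntervalIntegrable σ volume (-Real.pi) Real.pi)
    (g : ℝ → ℂ) (hg : Continuous g) {a b : ℝ}
    (ha : a ∈ Set.Icc (-Real.pi) Real.pi) (hb : b ∈ Set.Icc (-Real.pi) Real.pi) :
    IntervalIntegrable (fun θ => σ θ * g θ) volume a b := by
  refine (hint.mono_set ?_).mul_continuousOn hg.continuousOn
  refine Set.uIcc_subset_uIcc ?_ ?_ <;>
    simpa [Set.uIcc_of_le (by linarith [Real.pi_pos] : (-Real.pi) ≤ Real.pi)] using ‹_›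

section
variable {σ : ℝ → ℂ} (hint : IntervalIntegrable σ volume (-Real.pi) Real.pi)
  (hsym : ∀ θ : ℝ, σ (-θ) = σ θ)

include hint hsym in
lemma fourierCoeff_eq_cos (n : ℤ) :
    fourierCoeffZ σ n
      = (1 / (Real.pi : ℂ)) * ∫ θ in (0:ℝ)..Real.pi, σ θ * ((Real.cos (n * θ) : ℝ) : ℂ) := by
  have hπ : (0:ℝ) ∈ Set.Icc (-Real.pi) Real.pi := by
    constructor <;> linarith [Real.pi_pos]
  have hl : (-Real.pi) ∈ Set.Icc (-Real.pi) Real.pi := by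
    constructor <;> linarith [Real.pi_pos]
  have hr : Real.pi ∈ Set.Icc (-Real.pi) Real.pi := by
    constructor <;> linarith [Real.pi_pos]
  have hcos : Continuous fun θ : ℝ => ((Real.cos (n * θ) : ℝ) : ℂ) := by fun_prop
  have hsin : Continuous fun θ : ℝ => ((Real.sin (n * θ) : ℝ) : ℂ) := by fun_prop
  have hexp : ∀ θ : ℝ, σ θ * Complex.exp (-Complex.I * (n : ℂ) * (θ : ℂ))
      = σ θ * ((Real.cos (n * θ) : ℝ) : ℂ) - (σ θ * ((Real.sin (n * θ) : ℝ) : ℂ)) * Complex.I := by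
    intro θ
    have : -Complex.I * (n : ℂ) * (θ : ℂ) = ((-(n * θ) : ℝ) : ℂ) * Complex.I := by
      push_cast; ring
    rw [this, Complex.exp_mul_I, ← Complex.ofReal_cos, ← Complex.ofReal_sin,
      Real.cos_neg, Real.sin_neg]
    push_cast; ring
  have hsplit : (∫ θ in (-Real.pi)..Real.pi, σ θ * Complex.exp (-Complex.I * (n:ℂ) * (θ:ℂ)))
      = (∫ θ in (-Real.pi)..Real.pi, σ θ * ((Real.cos (n * θ) : ℝ) : ℂ))
        - (∫ θ in (-Real.pi)..Real.pi, σ θ * ((Real.sin (n * θ) : ℝ) : ℂ)) * Complex.I := by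
    rw [← intervalIntegral.integral_mul_const, ← intervalIntegral.integral_sub
      (sigInt' hint _ hcos hl hr) ((sigInt' hint _ hsin hl hr).mul_const _)]
    exact intervalIntegral.integral_congr fun θ _ => hexp θ
  have hodd : (∫ θ in (-Real.pi)..Real.pi, σ θ * ((Real.sin (n * θ) : ℝ) : ℂ)) = 0 := by
    have hneg := intervalIntegral.integral_comp_neg
      (a := -Real.pi) (b := Real.pi) (f := fun θ => σ θ * ((Real.sin (n * θ) : ℝ) : ℂ))
    simp only [neg_neg] at hneg
    have hpt : ∀ θ : ℝ, σ (-θ) * ((Real.sin (n * (-θ)) : ℝ) : ℂ)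
        = -(σ θ * ((Real.sin (n * θ) : ℝ) : ℂ)) := by
      intro θ
      rw [hsym, mul_neg, Real.sin_neg]
      push_cast; ring
    rw [intervalIntegral.integral_congr (fun θ _ => hpt θ), intervalIntegral.integral_neg] at hneg
    have h2 : (2:ℂ) * (∫ θ in (-Real.pi)..Real.pi, σ θ * ((Real.sin (n * θ) : ℝ) : ℂ)) = 0 := by
      linear_combination - hneg
    simpa using mul_eq_zero.mp h2
  have heven : (∫ θ in (-Real.pi)..Real.pi, σ θ * ((Real.cos (n * θ) : ℝ) : ℂ))
      = 2 * ∫ θ in (0:ℝ)..Real.pi, σ θ * ((Real.cos (n * θ) : ℝ) : ℂ) := by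
    have hadd := intervalIntegral.integral_add_adjacent_intervals
      (sigInt' hint _ hcos hl hπ) (sigInt' hint _ hcos hπ hr)
    have hneg := intervalIntegral.integral_comp_neg
      (a := (0:ℝ)) (b := Real.pi) (f := fun θ => σ θ * ((Real.cos (n * θ) : ℝ) : ℂ))
    simp only [neg_zero] at hneg
    have hpt : ∀ θ : ℝ, σ (-θ) * ((Real.cos (n * (-θ)) : ℝ) : ℂ)
        = σ θ * ((Real.cos (n * θ) : ℝ) : ℂ) := by
      intro θ; rw [hsym, mul_neg, Real.cos_neg]
    rw [intervalIntegral.integral_congr (fun θ _ => hpt θ)] at hneg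
    rw [← hadd, ← hneg]
    ring
  have hπ0 : (Real.pi : ℂ) ≠ 0 := by exact_mod_cast Real.pi_ne_zero
  rw [fourierCoeffZ, hsplit, hodd, heven]
  field_simp
  ring

include hint hsym in
lemma entry_cos (j k : ℤ) :
    fourierCoeffZ σ (j - k) + fourierCoeffZ σ (j + k)
      = (2 / (Real.pi : ℂ)) * ∫ θ in (0:ℝ)..Real.pi,
          σ θ * (((Real.cos ((j:ℝ) * θ) : ℝ) : ℂ) * ((Real.cos ((k:ℝ) * θ) : ℝ) : ℂ)) := by
  have h0 : (0:ℝ) ∈ Set.Icc (-Real.pi) Real.pi := by constructor <;> linarith [Real.pi_pos]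
  have hr : Real.pi ∈ Set.Icc (-Real.pi) Real.pi := by constructor <;> linarith [Real.pi_pos]
  rw [fourierCoeff_eq_cos hint hsym, fourierCoeff_eq_cos hint hsym]
  have hA : (∫ θ in (0:ℝ)..Real.pi, σ θ * ((Real.cos (((j - k : ℤ)) * θ) : ℝ) : ℂ))
        + (∫ θ in (0:ℝ)..Real.pi, σ θ * ((Real.cos (((j + k : ℤ)) * θ) : ℝ) : ℂ))
      = 2 * ∫ θ in (0:ℝ)..Real.pi,
          σ θ * (((Real.cos ((j:ℝ) * θ) : ℝ) : ℂ) * ((Real.cos ((k:ℝ) * θ) : ℝ) : ℂ)) := by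
    rw [← intervalIntegral.integral_const_mul,
      ← intervalIntegral.integral_add (sigInt' hint _ (by fun_prop) h0 hr)
        (sigInt' hint _ (by fun_prop) h0 hr)]
    refine intervalIntegral.integral_congr fun θ _ => ?_
    have hcos : Real.cos (((j - k : ℤ)) * θ) + Real.cos (((j + k : ℤ)) * θ)
        = 2 * (Real.cos ((j:ℝ) * θ) * Real.cos ((k:ℝ) * θ)) := by
      push_cast
      rw [sub_mul, add_mul, Real.cos_sub, Real.cos_add]
      ring
    have hc : ((Real.cos (((j - k : ℤ)) * θ) : ℝ) : ℂ) + ((Real.cos (((j + k : ℤ)) * θ) : ℝ) : ℂ)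
        = 2 * (((Real.cos ((j:ℝ) * θ) : ℝ) : ℂ) * ((Real.cos ((k:ℝ) * θ) : ℝ) : ℂ)) := by
      exact_mod_cast congrArg (Complex.ofReal) hcos
    push_cast at hc ⊢
    linear_combination σ θ * hc
  push_cast at hA ⊢
  linear_combination (1 / (Real.pi : ℂ)) * hA

include hint hsym in
lemma entry_sin (j k : ℤ) :
    fourierCoeffZ σ (j - k) - fourierCoeffZ σ (j + k + 2)
      = (2 / (Real.pi : ℂ)) * ∫ θ in (0:ℝ)..Real.pi,
          σ θ * (((Real.sin (((j:ℝ) + 1) * θ) : ℝ) : ℂ)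
            * ((Real.sin (((k:ℝ) + 1) * θ) : ℝ) : ℂ)) := by
  have h0 : (0:ℝ) ∈ Set.Icc (-Real.pi) Real.pi := by constructor <;> linarith [Real.pi_pos]
  have hr : Real.pi ∈ Set.Icc (-Real.pi) Real.pi := by constructor <;> linarith [Real.pi_pos]
  rw [fourierCoeff_eq_cos hint hsym, fourierCoeff_eq_cos hint hsym]
  have hA : (∫ θ in (0:ℝ)..Real.pi, σ θ * ((Real.cos (((j - k : ℤ)) * θ) : ℝ) : ℂ))
        - (∫ θ in (0:ℝ)..Real.pi, σ θ * ((Real.cos (((j + k + 2 : ℤ)) * θ) : ℝ) : ℂ))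
      = 2 * ∫ θ in (0:ℝ)..Real.pi,
          σ θ * (((Real.sin (((j:ℝ) + 1) * θ) : ℝ) : ℂ)
            * ((Real.sin (((k:ℝ) + 1) * θ) : ℝ) : ℂ)) := by
    rw [← intervalIntegral.integral_const_mul,
      ← intervalIntegral.integral_sub (sigInt' hint _ (by fun_prop) h0 hr)
        (sigInt' hint _ (by fun_prop) h0 hr)]
    refine intervalIntegral.integral_congr fun θ _ => ?_
    have hcos : Real.cos (((j - k : ℤ)) * θ) - Real.cos (((j + k + 2 : ℤ)) * θ)
        = 2 * (Real.sin (((j:ℝ) + 1) * θ) * Real.sin (((k:ℝ) + 1) * θ)) := by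
      push_cast
      have e1 : ((j:ℝ) - k) * θ = ((j:ℝ) + 1) * θ - ((k:ℝ) + 1) * θ := by ring
      have e2 : ((j:ℝ) + k + 2) * θ = ((j:ℝ) + 1) * θ + ((k:ℝ) + 1) * θ := by ring
      rw [e1, e2, Real.cos_sub, Real.cos_add]
      ring
    have hc : ((Real.cos (((j - k : ℤ)) * θ) : ℝ) : ℂ) - ((Real.cos (((j + k + 2 : ℤ)) * θ) : ℝ) : ℂ)
        = 2 * (((Real.sin (((j:ℝ) + 1) * θ) : ℝ) : ℂ)
          * ((Real.sin (((k:ℝ) + 1) * θ) : ℝ) : ℂ)) := by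
      exact_mod_cast congrArg (Complex.ofReal) hcos
    push_cast at hc ⊢
    linear_combination σ θ * hc
  push_cast at hA ⊢
  linear_combination (1 / (Real.pi : ℂ)) * hA

include hint in
lemma expand_sum {K : ℕ}
    (c : ℝ → ℂ) (hc : Continuous c) (P Q : ℂ[X]) (hP : P.natDegree < K) (hQ : Q.natDegree < K) :
    (∑ m : Fin K, ∑ n : Fin K, P.coeff m *
        (∫ θ in (0:ℝ)..Real.pi, σ θ * (c θ * ((Real.cos θ : ℝ) : ℂ) ^ ((m:ℕ) + (n:ℕ)))) *
          Q.coeff n)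
      = ∫ θ in (0:ℝ)..Real.pi,
          σ θ * (c θ * (P.eval ((Real.cos θ : ℝ) : ℂ) * Q.eval ((Real.cos θ : ℝ) : ℂ))) := by
  have h0 : (0:ℝ) ∈ Set.Icc (-Real.pi) Real.pi := by constructor <;> linarith [Real.pi_pos]
  have hr : Real.pi ∈ Set.Icc (-Real.pi) Real.pi := by constructor <;> linarith [Real.pi_pos]
  have hI : ∀ m n : ℕ, IntervalIntegrable
      (fun θ => σ θ * (c θ * ((Real.cos θ : ℝ) : ℂ) ^ (m + n))) volume 0 Real.pi := by
    intro m n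
    exact sigInt' hint _ (by fun_prop) h0 hr
  have hI' : ∀ (m n : Fin K), IntervalIntegrable
      (fun θ => P.coeff m * (σ θ * (c θ * ((Real.cos θ : ℝ) : ℂ) ^ ((m:ℕ) + (n:ℕ)))) * Q.coeff n)
        volume 0 Real.pi := fun m n => ((hI m n).const_mul _).mul_const _
  calc
    (∑ m : Fin K, ∑ n : Fin K, P.coeff m *
        (∫ θ in (0:ℝ)..Real.pi, σ θ * (c θ * ((Real.cos θ : ℝ) : ℂ) ^ ((m:ℕ) + (n:ℕ)))) *
          Q.coeff n)
        = ∑ m : Fin K, ∑ n : Fin K, ∫ θ in (0:ℝ)..Real.pi,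
            P.coeff m * (σ θ * (c θ * ((Real.cos θ : ℝ) : ℂ) ^ ((m:ℕ) + (n:ℕ)))) * Q.coeff n := by
      refine Finset.sum_congr rfl fun m _ => Finset.sum_congr rfl fun n _ => ?_
      rw [intervalIntegral.integral_mul_const, intervalIntegral.integral_const_mul]
    _ = ∫ θ in (0:ℝ)..Real.pi, ∑ m : Fin K, ∑ n : Fin K,
            P.coeff m * (σ θ * (c θ * ((Real.cos θ : ℝ) : ℂ) ^ ((m:ℕ) + (n:ℕ)))) * Q.coeff n := by
      have step1 : ∀ m : Fin K,
          (∑ n : Fin K, ∫ θ in (0:ℝ)..Real.pi,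
              P.coeff m * (σ θ * (c θ * ((Real.cos θ : ℝ) : ℂ) ^ ((m:ℕ) + (n:ℕ)))) * Q.coeff n)
            = ∫ θ in (0:ℝ)..Real.pi, ∑ n : Fin K,
                P.coeff m * (σ θ * (c θ * ((Real.cos θ : ℝ) : ℂ) ^ ((m:ℕ) + (n:ℕ)))) * Q.coeff n :=
        fun m => (intervalIntegral.integral_finset_sum fun n _ => hI' m n).symm
      rw [Finset.sum_congr rfl fun m _ => step1 m]
      have hsum : ∀ m : Fin K, IntervalIntegrable
          (fun θ : ℝ => ∑ n : Fin K,
            P.coeff m * (σ θ * (c θ * ((Real.cos θ : ℝ) : ℂ) ^ ((m:ℕ) + (n:ℕ)))) * Q.coeff n)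
          volume 0 Real.pi := by
        intro m
        have h := IntervalIntegrable.sum (μ := volume) (a := 0) (b := Real.pi) Finset.univ
          (f := fun (n : Fin K) (θ : ℝ) =>
            P.coeff m * (σ θ * (c θ * ((Real.cos θ : ℝ) : ℂ) ^ ((m:ℕ) + (n:ℕ)))) * Q.coeff n)
          (fun n _ => hI' m n)
        have he : (∑ n : Fin K, fun (θ : ℝ) =>
            P.coeff m * (σ θ * (c θ * ((Real.cos θ : ℝ) : ℂ) ^ ((m:ℕ) + (n:ℕ)))) * Q.coeff n)
            = fun (θ : ℝ) => ∑ n : Fin K,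
              P.coeff m * (σ θ * (c θ * ((Real.cos θ : ℝ) : ℂ) ^ ((m:ℕ) + (n:ℕ)))) * Q.coeff n := by
          ext θ; simp
        rwa [he] at h
      exact (intervalIntegral.integral_finset_sum
        (f := fun (m : Fin K) (θ : ℝ) => ∑ n : Fin K,
          P.coeff m * (σ θ * (c θ * ((Real.cos θ : ℝ) : ℂ) ^ ((m:ℕ) + (n:ℕ)))) * Q.coeff n)
        fun m _ => hsum m).symm
    _ = ∫ θ in (0:ℝ)..Real.pi,
          σ θ * (c θ * (P.eval ((Real.cos θ : ℝ) : ℂ) * Q.eval ((Real.cos θ : ℝ) : ℂ))) := by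
      refine intervalIntegral.integral_congr fun θ _ => ?_
      rw [Polynomial.eval_eq_sum_range' hP, Polynomial.eval_eq_sum_range' hQ,
        Finset.sum_mul_sum]
      simp only [Finset.mul_sum, ← Fin.sum_univ_eq_sum_range]
      refine Finset.sum_congr rfl fun m _ => Finset.sum_congr rfl fun n _ => ?_
      rw [pow_add]
      ring

end

/-! ### evaluation lemmas -/

lemma Teval (n : ℕ) (θ : ℝ) :
    (T ℂ (n : ℤ)).eval ((Real.cos θ : ℝ) : ℂ) = ((Real.cos ((n:ℝ) * θ) : ℝ) : ℂ) := by
  have h := T_complex_cos (θ:ℂ) (n:ℤ)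
  rw [show Complex.cos (θ:ℂ) = ((Real.cos θ : ℝ) : ℂ) from (Complex.ofReal_cos θ).symm] at h
  rw [h, show (((n:ℤ):ℂ)) * (θ:ℂ) = (((n:ℝ) * θ : ℝ) : ℂ) by push_cast; ring,
    ← Complex.ofReal_cos]

lemma Ueval (n : ℕ) (θ : ℝ) :
    (U ℂ (n : ℤ)).eval ((Real.cos θ : ℝ) : ℂ) * ((Real.sin θ : ℝ) : ℂ)
      = ((Real.sin (((n:ℝ) + 1) * θ) : ℝ) : ℂ) := by
  have h := U_complex_cos (θ:ℂ) (n:ℤ)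
  rw [show Complex.cos (θ:ℂ) = ((Real.cos θ : ℝ) : ℂ) from (Complex.ofReal_cos θ).symm,
    show Complex.sin (θ:ℂ) = ((Real.sin θ : ℝ) : ℂ) from (Complex.ofReal_sin θ).symm] at h
  rw [h, show (((n:ℤ):ℂ) + 1) * (θ:ℂ) = ((((n:ℝ) + 1) * θ : ℝ) : ℂ) by push_cast; ring,
    ← Complex.ofReal_sin]

/-! ### arithmetic helpers -/

lemma nat1 (K : ℕ) (hK : 0 < K) :
    2 * (∑ j ∈ Finset.range K, (j - 1)) + 3 * K = K^2 + 2 := by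
  induction K, hK using Nat.le_induction with
  | base => simp
  | succ n hn ih =>
    rw [Finset.sum_range_succ]
    have h2 : (n+1)^2 = n^2 + 2*n + 1 := by ring
    omega

lemma nat2 (K : ℕ) : K * (K - 1) + K = K^2 := by
  cases K with
  | zero => rfl
  | succ n => simp [Nat.succ_sub_one]; ring

end DIKAux

open DIKAux Polynomial Polynomial.Chebyshev intervalIntegral Matrix

/-- The two `even` identities of Lemma 2.7 of Deift–Its–Krasovsky, relating
Toeplitz±Hankel determinants (integrals over `O⁺(2K)` and `Sp(2K)`) to Hankel
determinants of moments of weights on `[-1,1]` under the substitution `x = cos θ`. -/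
theorem dik_lemma_even (K : ℕ) (hK : 0 < K) (σ : ℝ → ℂ) (f : ℝ → ℂ)
    (hper : Function.Periodic σ (2 * Real.pi))
    (hint : IntervalIntegrable σ volume (-Real.pi) Real.pi)
    (hsym : ∀ θ : ℝ, σ (-θ) = σ θ)
    (hf : ∀ θ : ℝ, f (Real.cos θ) = σ θ) :
    (1 / 2) * Matrix.det (Matrix.of fun j k : Fin K =>
        fourierCoeffZ σ ((j : ℤ) - (k : ℤ)) + fourierCoeffZ σ ((j : ℤ) + (k : ℤ)))
      = ((2 : ℂ) ^ (K ^ 2 - K + 1) / (2 * (Real.pi : ℂ)) ^ K) *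
          hankelDet K (fun x => f x / ((Real.sqrt (1 - x ^ 2) : ℝ) : ℂ))
    ∧ Matrix.det (Matrix.of fun j k : Fin K =>
        fourierCoeffZ σ ((j : ℤ) - (k : ℤ)) - fourierCoeffZ σ ((j : ℤ) + (k : ℤ) + 2))
      = ((2 : ℂ) ^ (K ^ 2 + K) / (2 * (Real.pi : ℂ)) ^ K) *
          hankelDet K (fun x => f x * ((Real.sqrt (1 - x ^ 2) : ℝ) : ℂ)) := by
  have hπ0 : (Real.pi : ℂ) ≠ 0 := by exact_mod_cast Real.pi_ne_zero
  have h2π : ((2 : ℂ) * (Real.pi : ℂ)) ^ K ≠ 0 :=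
    pow_ne_zero _ (mul_ne_zero two_ne_zero hπ0)
  have hmul : (2 / (Real.pi:ℂ))^K * ((2 * (Real.pi:ℂ))^K) = 2^(2*K) := by
    rw [← mul_pow, pow_mul]
    congr 1
    field_simp
  constructor
  · -- part 1
    set A : Matrix (Fin K) (Fin K) ℂ :=
      Matrix.of (fun j m : Fin K => (T ℂ ((j:ℕ) : ℤ)).coeff (m:ℕ)) with hAdef
    set G1 : Matrix (Fin K) (Fin K) ℂ :=
      Matrix.of (fun m n : Fin K => ∫ θ in (0:ℝ)..Real.pi,
        σ θ * ((1:ℂ) * ((Real.cos θ : ℝ) : ℂ) ^ ((m:ℕ) + (n:ℕ)))) with hG1def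
    have hM1 : (Matrix.of fun j k : Fin K =>
          fourierCoeffZ σ ((j : ℤ) - (k : ℤ)) + fourierCoeffZ σ ((j : ℤ) + (k : ℤ)))
        = (2 / (Real.pi:ℂ)) • (A * G1 * Aᵀ) := by
      ext j k
      have hAGA : (A * G1 * Aᵀ) j k
          = ∫ θ in (0:ℝ)..Real.pi, σ θ * ((1:ℂ) *
              ((T ℂ ((j:ℕ):ℤ)).eval ((Real.cos θ : ℝ) : ℂ)
                * (T ℂ ((k:ℕ):ℤ)).eval ((Real.cos θ : ℝ) : ℂ))) := by
        rw [← expand_sum hint (fun _ => (1:ℂ)) continuous_const _ _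
          (T_natDegree_lt j.isLt) (T_natDegree_lt k.isLt)]
        simp only [hAdef, hG1def, Matrix.mul_apply, Matrix.transpose_apply, Matrix.of_apply,
          Finset.sum_mul]
        rw [Finset.sum_comm]
      rw [Matrix.smul_apply, Matrix.of_apply, hAGA, smul_eq_mul, entry_cos hint hsym]
      congr 1
      refine intervalIntegral.integral_congr fun θ _ => ?_
      rw [Teval, Teval, one_mul]
      push_cast
      ring
    have htri : A.BlockTriangular OrderDual.toDual := by
      intro i j h
      exact (T_aux (i:ℕ)).1 (j:ℕ) (by exact_mod_cast h)
    have hdetA : A.det = 2 ^ (∑ j ∈ Finset.range K, (j - 1)) := by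
      rw [Matrix.det_of_lowerTriangular A htri]
      have hdg : ∀ j : Fin K, A j j = (2:ℂ)^((j:ℕ)-1) := fun j => (T_aux (j:ℕ)).2
      rw [Finset.prod_congr rfl (fun j _ => hdg j), Finset.prod_pow_eq_pow_sum]
      congr 1
      exact Fin.sum_univ_eq_sum_range (fun j => j - 1) K
    have hG1 : hankelDet K (fun x => f x / ((Real.sqrt (1 - x ^ 2) : ℝ) : ℂ)) = G1.det := by
      rw [hankelDet, hG1def]
      congr 1
      ext j k
      simp only [Matrix.of_apply]
      rw [mom1 σ f hf ((j:ℕ) + (k:ℕ))]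
      exact intervalIntegral.integral_congr fun θ _ => by ring
    set s := ∑ j ∈ Finset.range K, (j - 1) with hs
    have key2 : (2:ℂ)^(2*K) * ((2:ℂ)^s * (2:ℂ)^s) = 2 * 2^(K^2 - K + 1) := by
      rw [← pow_add, ← pow_add, show ((2:ℂ) * 2^(K^2-K+1)) = 2^(K^2-K+1+1) by rw [pow_succ]; ring]
      congr 1
      have h1 := nat1 K hK
      have hKsq : K ≤ K^2 := by nlinarith
      omega
    calc (1/2 : ℂ) * Matrix.det (Matrix.of fun j k : Fin K =>
            fourierCoeffZ σ ((j : ℤ) - (k : ℤ)) + fourierCoeffZ σ ((j : ℤ) + (k : ℤ)))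
        = (1/2 : ℂ) * ((2 / (Real.pi:ℂ))^K * ((2:ℂ)^s * G1.det * (2:ℂ)^s)) := by
          rw [hM1, Matrix.det_smul, Matrix.det_mul, Matrix.det_mul, Matrix.det_transpose,
            hdetA, Fintype.card_fin]
      _ = (2:ℂ)^(K^2 - K + 1) / (2 * (Real.pi:ℂ))^K * G1.det := by
          refine mul_right_cancel₀ h2π ?_
          have expand : (2:ℂ)^(K^2-K+1) / (2*(Real.pi:ℂ))^K * G1.det * (2*(Real.pi:ℂ))^K
              = (2:ℂ)^(K^2-K+1) * G1.det := by
            field_simp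
          rw [expand]
          linear_combination ((1/2:ℂ) * ((2:ℂ)^s * G1.det * (2:ℂ)^s)) * hmul
            + ((1/2:ℂ) * G1.det) * key2
      _ = ((2 : ℂ) ^ (K ^ 2 - K + 1) / (2 * (Real.pi : ℂ)) ^ K) *
            hankelDet K (fun x => f x / ((Real.sqrt (1 - x ^ 2) : ℝ) : ℂ)) := by
          rw [hG1]
  · -- part 2
    set B : Matrix (Fin K) (Fin K) ℂ :=
      Matrix.of (fun j m : Fin K => (U ℂ ((j:ℕ) : ℤ)).coeff (m:ℕ)) with hBdef
    set G2 : Matrix (Fin K) (Fin K) ℂ :=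
      Matrix.of (fun m n : Fin K => ∫ θ in (0:ℝ)..Real.pi,
        σ θ * (((Real.sin θ : ℝ) : ℂ)^2 * ((Real.cos θ : ℝ) : ℂ) ^ ((m:ℕ) + (n:ℕ)))) with hG2def
    have hM2 : (Matrix.of fun j k : Fin K =>
          fourierCoeffZ σ ((j : ℤ) - (k : ℤ)) - fourierCoeffZ σ ((j : ℤ) + (k : ℤ) + 2))
        = (2 / (Real.pi:ℂ)) • (B * G2 * Bᵀ) := by
      ext j k
      have hAGA : (B * G2 * Bᵀ) j k
          = ∫ θ in (0:ℝ)..Real.pi, σ θ * (((Real.sin θ : ℝ) : ℂ)^2 *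
              ((U ℂ ((j:ℕ):ℤ)).eval ((Real.cos θ : ℝ) : ℂ)
                * (U ℂ ((k:ℕ):ℤ)).eval ((Real.cos θ : ℝ) : ℂ))) := by
        rw [← expand_sum hint (fun θ => ((Real.sin θ : ℝ) : ℂ)^2) (by fun_prop) _ _
          (U_natDegree_lt j.isLt) (U_natDegree_lt k.isLt)]
        simp only [hBdef, hG2def, Matrix.mul_apply, Matrix.transpose_apply, Matrix.of_apply,
          Finset.sum_mul]
        rw [Finset.sum_comm]
      rw [Matrix.smul_apply, Matrix.of_apply, hAGA, smul_eq_mul, entry_sin hint hsym]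
      congr 1
      refine intervalIntegral.integral_congr fun θ _ => ?_
      have hj := Ueval (j:ℕ) θ
      have hk := Ueval (k:ℕ) θ
      push_cast at hj hk ⊢
      rw [← hj, ← hk]
      ring
    have htri : B.BlockTriangular OrderDual.toDual := by
      intro i j h
      exact (U_aux (i:ℕ)).1 (j:ℕ) (by exact_mod_cast h)
    have hdetB : B.det = 2 ^ (∑ j ∈ Finset.range K, j) := by
      rw [Matrix.det_of_lowerTriangular B htri]
      have hdg : ∀ j : Fin K, B j j = (2:ℂ)^((j:ℕ)) := fun j => (U_aux (j:ℕ)).2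
      rw [Finset.prod_congr rfl (fun j _ => hdg j), Finset.prod_pow_eq_pow_sum]
      congr 1
      exact Fin.sum_univ_eq_sum_range (fun j => j) K
    have hG2 : (hankelDet K fun x => f x * ((Real.sqrt (1 - x ^ 2) : ℝ) : ℂ)) = G2.det := by
      rw [hankelDet, hG2def]
      congr 1
      ext j k
      simp only [Matrix.of_apply]
      rw [mom2 σ f hf ((j:ℕ) + (k:ℕ))]
      exact intervalIntegral.integral_congr fun θ _ => by ring
    set t := ∑ j ∈ Finset.range K, j with ht
    have key2 : (2:ℂ)^(2*K) * ((2:ℂ)^t * (2:ℂ)^t) = 2^(K^2 + K) := by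
      rw [← pow_add, ← pow_add]
      congr 1
      have h1 := Finset.sum_range_id_mul_two K
      have h2 := nat2 K
      omega
    calc Matrix.det (Matrix.of fun j k : Fin K =>
            fourierCoeffZ σ ((j : ℤ) - (k : ℤ)) - fourierCoeffZ σ ((j : ℤ) + (k : ℤ) + 2))
        = (2 / (Real.pi:ℂ))^K * ((2:ℂ)^t * G2.det * (2:ℂ)^t) := by
          rw [hM2, Matrix.det_smul, Matrix.det_mul, Matrix.det_mul, Matrix.det_transpose,
            hdetB, Fintype.card_fin]
      _ = (2:ℂ)^(K^2 + K) / (2 * (Real.pi:ℂ))^K * G2.det := by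
          refine mul_right_cancel₀ h2π ?_
          have expand : (2:ℂ)^(K^2+K) / (2*(Real.pi:ℂ))^K * G2.det * (2*(Real.pi:ℂ))^K
              = (2:ℂ)^(K^2+K) * G2.det := by
            field_simp
          rw [expand]
          linear_combination ((2:ℂ)^t * G2.det * (2:ℂ)^t) * hmul + G2.det * key2
      _ = ((2 : ℂ) ^ (K ^ 2 + K) / (2 * (Real.pi : ℂ)) ^ K) *
            hankelDet K (fun x => f x * ((Real.sqrt (1 - x ^ 2) : ℝ) : ℂ)) := by
          rw [hG2]
end

section
/- Let K be a positive integer and let σ : ℝ → ℂ be a 2π-periodic integrable function satisfying σ(θ) = σ(-θ), with Fourier coefficients σ_j = (1/2π) ∫_{-π}^{π} σ(θ) e^{-i j θ} dθ. Write f for the function on [-1,1] defined by f(cos θ) = σ(θ), and for a weight w on (-1,1) let D_K(w) = det( ∫_{-1}^{1} x^{j+k-2} w(x) dx )_{j,k=1}^{K}. Then: (i) det( σ_{j-k} + σ_{j+k-1} )_{j,k=1}^{K} = (2^{K²} / (2π)^K) · D_K( f(x) · √((1+x)/(1-x)) ); and (ii) det( σ_{j-k} - σ_{j+k-1} )_{j,k=1}^{K}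 = (2^{K²} / (2π)^K) · D_K( f(x) · √((1-x)/(1+x)) ). -/
open MeasureTheory

namespace DIKodd

open Real intervalIntegral Polynomial Set

set_option maxHeartbeats 1000000

noncomputable def Vp : ℕ → Polynomial ℝ
  | 0 => 1
  | 1 => Polynomial.C 2 * Polynomial.X - 1
  | (n+2) => Polynomial.C 2 * (Polynomial.X * Vp (n+1)) - Vp n

noncomputable def Wp : ℕ → Polynomial ℝ
  | 0 => 1
  | 1 => Polynomial.C 2 * Polynomial.X + 1
  | (n+2) => Polynomial.C 2 * (Polynomial.X * Wp (n+1)) - Wp n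

lemma cos_rec (A θ : ℝ) :
    Real.cos (A + θ) = 2 * Real.cos θ * Real.cos A - Real.cos (A - θ) := by
  rw [Real.cos_add, Real.cos_sub]; ring

lemma sin_rec (A θ : ℝ) :
    Real.sin (A + θ) = 2 * Real.cos θ * Real.sin A - Real.sin (A - θ) := by
  rw [Real.sin_add, Real.sin_sub]; ring

lemma Vp_eval (n : ℕ) (θ : ℝ) :
    (Vp n).eval (Real.cos θ) * Real.cos (θ / 2) = Real.cos (((n : ℝ) + 1/2) * θ) := by
  induction n using Nat.twoStepInduction with
  | zero =>
    simp only [Vp, Polynomial.eval_one, one_mul]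
    congr 1; push_cast; ring
  | one =>
    have e : (((1:ℕ) : ℝ) + 1/2) * θ = θ/2 + θ := by push_cast; ring
    have e2 : θ/2 - θ = -(θ/2) := by ring
    rw [e, cos_rec, e2, Real.cos_neg]
    simp [Vp]; ring
  | more n ih0 ih1 =>
    have e : (((n+2:ℕ) : ℝ) + 1/2) * θ = (((n+1:ℕ) : ℝ) + 1/2) * θ + θ := by push_cast; ring
    have e2 : (((n+1:ℕ) : ℝ) + 1/2) * θ - θ = (((n:ℕ) : ℝ) + 1/2) * θ := by push_cast; ring
    rw [e, cos_rec, e2, ← ih0, ← ih1]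
    simp [Vp]; ring

lemma Wp_eval (n : ℕ) (θ : ℝ) :
    (Wp n).eval (Real.cos θ) * Real.sin (θ / 2) = Real.sin (((n : ℝ) + 1/2) * θ) := by
  induction n using Nat.twoStepInduction with
  | zero =>
    simp only [Wp, Polynomial.eval_one, one_mul]
    congr 1; push_cast; ring
  | one =>
    have e : (((1:ℕ) : ℝ) + 1/2) * θ = θ/2 + θ := by push_cast; ring
    have e2 : θ/2 - θ = -(θ/2) := by ring
    rw [e, sin_rec, e2, Real.sin_neg]
    simp [Wp]; ring
  | more n ih0 ih1 =>
    have e : (((n+2:ℕ) : ℝ) + 1/2) * θ = (((n+1:ℕ) : ℝ) + 1/2) * θ + θ := by push_cast; ring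
    have e2 : (((n+1:ℕ) : ℝ) + 1/2) * θ - θ = (((n:ℕ) : ℝ) + 1/2) * θ := by push_cast; ring
    rw [e, sin_rec, e2, ← ih0, ← ih1]
    simp [Wp]; ring

lemma Vp_coeff (n : ℕ) : (Vp n).coeff n = 2 ^ n ∧ ∀ m, n < m → (Vp n).coeff m = 0 := by
  induction n using Nat.twoStepInduction with
  | zero =>
    constructor
    · simp [Vp, Polynomial.coeff_one]
    · intro m hm; simp [Vp, Polynomial.coeff_one]; omega
  | one =>
    constructor
    · simp [Vp, Polynomial.coeff_one]
    · intro m hm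
      simp only [Vp, Polynomial.coeff_sub, Polynomial.coeff_C_mul, Polynomial.coeff_one,
        Polynomial.coeff_X]
      rw [if_neg (by omega), if_neg (by omega)]; ring
  | more n ih0 ih1 =>
    constructor
    · simp only [Vp, Polynomial.coeff_sub, Polynomial.coeff_C_mul]
      rw [show n + 2 = (n + 1) + 1 from rfl, Polynomial.coeff_X_mul, ih1.1,
        ih0.2 _ (by omega)]
      ring
    · intro m hm
      obtain ⟨m', rfl⟩ : ∃ m', m = m' + 1 := ⟨m - 1, by omega⟩
      simp only [Vp, Polynomial.coeff_sub, Polynomial.coeff_C_mul, Polynomial.coeff_X_mul]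
      rw [ih1.2 _ (by omega), ih0.2 _ (by omega)]; ring

lemma Wp_coeff (n : ℕ) : (Wp n).coeff n = 2 ^ n ∧ ∀ m, n < m → (Wp n).coeff m = 0 := by
  induction n using Nat.twoStepInduction with
  | zero =>
    constructor
    · simp [Wp, Polynomial.coeff_one]
    · intro m hm; simp [Wp, Polynomial.coeff_one]; omega
  | one =>
    constructor
    · simp [Wp, Polynomial.coeff_one]
    · intro m hm
      simp only [Wp, Polynomial.coeff_add, Polynomial.coeff_C_mul, Polynomial.coeff_one,
        Polynomial.coeff_X]
      rw [if_neg (by omega), if_neg (by omega)]; ring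
  | more n ih0 ih1 =>
    constructor
    · simp only [Wp, Polynomial.coeff_sub, Polynomial.coeff_C_mul]
      rw [show n + 2 = (n + 1) + 1 from rfl, Polynomial.coeff_X_mul, ih1.1,
        ih0.2 _ (by omega)]
      ring
    · intro m hm
      obtain ⟨m', rfl⟩ : ∃ m', m = m' + 1 := ⟨m - 1, by omega⟩
      simp only [Wp, Polynomial.coeff_sub, Polynomial.coeff_C_mul, Polynomial.coeff_X_mul]
      rw [ih1.2 _ (by omega), ih0.2 _ (by omega)]; ring


lemma integral_odd {g : ℝ → ℂ} {a : ℝ} (hodd : ∀ θ, g (-θ) = -g θ) :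
    ∫ θ in (-a)..a, g θ = 0 := by
  have h := intervalIntegral.integral_comp_neg (a := -a) (b := a) (f := g)
  simp only [neg_neg, hodd, intervalIntegral.integral_neg] at h
  have h2 : (2 : ℂ) * ∫ θ in (-a)..a, g θ = 0 := by linear_combination -h
  exact (mul_eq_zero.mp h2).resolve_left two_ne_zero

lemma integral_even {g : ℝ → ℂ} {a : ℝ} (ha : 0 ≤ a)
    (hg : IntervalIntegrable g MeasureTheory.volume (-a) a) (heven : ∀ θ, g (-θ) = g θ) :
    ∫ θ in (-a)..a, g θ = 2 * ∫ θ in (0:ℝ)..a, g θ := by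
  have hmem0 : (0:ℝ) ∈ Set.uIcc (-a) a :=
    Set.mem_uIcc.mpr (Or.inl ⟨neg_nonpos.mpr ha, ha⟩)
  have h1 : IntervalIntegrable g MeasureTheory.volume (-a) 0 :=
    hg.mono_set (Set.uIcc_subset_uIcc Set.left_mem_uIcc hmem0)
  have h2 : IntervalIntegrable g MeasureTheory.volume 0 a :=
    hg.mono_set (Set.uIcc_subset_uIcc hmem0 Set.right_mem_uIcc)
  have hsplit := intervalIntegral.integral_add_adjacent_intervals h1 h2
  have hrefl : ∫ θ in (-a)..(0:ℝ), g θ = ∫ θ in (0:ℝ)..a, g θ := by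
    have h := intervalIntegral.integral_comp_neg (a := (0:ℝ)) (b := a) (f := g)
    simp only [heven, neg_zero] at h
    exact h.symm
  rw [← hsplit, hrefl]; ring

/-- Fourier coefficient of an even symbol as a cosine integral. -/
lemma coeff_cos {σ : ℝ → ℂ}
    (hint : IntervalIntegrable σ MeasureTheory.volume (-Real.pi) Real.pi)
    (hsym : ∀ θ : ℝ, σ (-θ) = σ θ) (n : ℤ) :
    fourierCoeffZ σ n = (1 / (2 * (Real.pi : ℂ))) *
      ∫ θ in (-Real.pi)..Real.pi, σ θ * ((Real.cos ((n : ℝ) * θ) : ℝ) : ℂ) := by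
  unfold fourierCoeffZ
  congr 1
  have hexp : ∀ θ : ℝ, Complex.exp (-Complex.I * (n : ℂ) * (θ : ℂ))
      = ((Real.cos ((n : ℝ) * θ) : ℝ) : ℂ) - Complex.I * ((Real.sin ((n : ℝ) * θ) : ℝ) : ℂ) := by
    intro θ
    have : -Complex.I * (n : ℂ) * (θ : ℂ) = (((-((n:ℝ) * θ) : ℝ)) : ℂ) * Complex.I := by
      push_cast; ring
    rw [this, Complex.exp_mul_I, ← Complex.ofReal_cos, ← Complex.ofReal_sin,
      Real.cos_neg, Real.sin_neg]
    push_cast; ring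
  have hc : IntervalIntegrable (fun θ => σ θ * ((Real.cos ((n : ℝ) * θ) : ℝ) : ℂ))
      MeasureTheory.volume (-Real.pi) Real.pi :=
    hint.mul_continuousOn (Continuous.continuousOn (by fun_prop))
  have hs : IntervalIntegrable (fun θ => σ θ * ((Real.sin ((n : ℝ) * θ) : ℝ) : ℂ))
      MeasureTheory.volume (-Real.pi) Real.pi :=
    hint.mul_continuousOn (Continuous.continuousOn (by fun_prop))
  calc ∫ θ in (-Real.pi)..Real.pi, σ θ * Complex.exp (-Complex.I * (n : ℂ) * (θ : ℂ))
      = ∫ θ in (-Real.pi)..Real.pi, (σ θ * ((Real.cos ((n : ℝ) * θ) : ℝ) : ℂ)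
          - Complex.I * (σ θ * ((Real.sin ((n : ℝ) * θ) : ℝ) : ℂ))) := by
        apply intervalIntegral.integral_congr; intro θ _
        simp only [hexp θ]; ring
    _ = (∫ θ in (-Real.pi)..Real.pi, σ θ * ((Real.cos ((n : ℝ) * θ) : ℝ) : ℂ))
          - Complex.I * ∫ θ in (-Real.pi)..Real.pi, σ θ * ((Real.sin ((n : ℝ) * θ) : ℝ) : ℂ) := by
        rw [intervalIntegral.integral_sub hc (hs.const_mul _), intervalIntegral.integral_const_mul]
    _ = ∫ θ in (-Real.pi)..Real.pi, σ θ * ((Real.cos ((n : ℝ) * θ) : ℝ) : ℂ) := by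
        have hzero : (∫ θ in (-Real.pi)..Real.pi, σ θ * ((Real.sin ((n : ℝ) * θ) : ℝ) : ℂ)) = 0 :=
          integral_odd (fun θ => by
            show σ (-θ) * _ = -(σ θ * _)
            rw [hsym θ, mul_neg, Real.sin_neg]; push_cast; ring)
        rw [hzero, mul_zero, sub_zero]


lemma key_plus (j k : ℕ) (θ : ℝ) :
    Real.cos (((j:ℝ) - k) * θ) + 1 * Real.cos (((j:ℝ) + k + 1) * θ)
      = (1 + 1 * Real.cos θ) * ((Vp j).eval (Real.cos θ) * (Vp k).eval (Real.cos θ)) := by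
  have e1 : ((j:ℝ) - k) * θ = ((j:ℝ) + 1/2) * θ - ((k:ℝ) + 1/2) * θ := by ring
  have e2 : ((j:ℝ) + k + 1) * θ = ((j:ℝ) + 1/2) * θ + ((k:ℝ) + 1/2) * θ := by ring
  have h1 := Vp_eval j θ
  have h2 := Vp_eval k θ
  have h3 := Real.cos_two_mul (θ/2)
  rw [show 2 * (θ/2) = θ by ring] at h3
  rw [e1, e2, Real.cos_sub, Real.cos_add]
  linear_combination (-2 * Real.cos (((k:ℝ) + 1/2) * θ)) * h1
    + (-2 * (Vp j).eval (Real.cos θ) * Real.cos (θ/2)) * h2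
    + (-(Vp j).eval (Real.cos θ) * (Vp k).eval (Real.cos θ)) * h3

lemma key_minus (j k : ℕ) (θ : ℝ) :
    Real.cos (((j:ℝ) - k) * θ) + (-1) * Real.cos (((j:ℝ) + k + 1) * θ)
      = (1 + (-1) * Real.cos θ) * ((Wp j).eval (Real.cos θ) * (Wp k).eval (Real.cos θ)) := by
  have e1 : ((j:ℝ) - k) * θ = ((j:ℝ) + 1/2) * θ - ((k:ℝ) + 1/2) * θ := by ring
  have e2 : ((j:ℝ) + k + 1) * θ = ((j:ℝ) + 1/2) * θ + ((k:ℝ) + 1/2) * θ := by ring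
  have h1 := Wp_eval j θ
  have h2 := Wp_eval k θ
  have h3 := Real.cos_two_mul (θ/2)
  rw [show 2 * (θ/2) = θ by ring] at h3
  have hp := Real.sin_sq_add_cos_sq (θ/2)
  rw [e1, e2, Real.cos_sub, Real.cos_add]
  linear_combination (-2 * Real.sin (((k:ℝ) + 1/2) * θ)) * h1
    + (-2 * (Wp j).eval (Real.cos θ) * Real.sin (θ/2)) * h2
    + ((Wp j).eval (Real.cos θ) * (Wp k).eval (Real.cos θ)) * h3
    + (2 * (Wp j).eval (Real.cos θ) * (Wp k).eval (Real.cos θ)) * hp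

lemma sqrt_weight {ε c : ℝ} (hε : ε = 1 ∨ ε = -1) (h1 : -1 < c) (h2 : c < 1) :
    Real.sqrt (1 - c ^ 2) * Real.sqrt ((1 + ε * c) / (1 - ε * c)) = 1 + ε * c := by
  have hlt : ε * c < 1 := by rcases hε with rfl | rfl <;> nlinarith
  have hgt : -1 < ε * c := by rcases hε with rfl | rfl <;> nlinarith
  have hε2 : ε ^ 2 = 1 := by rcases hε with rfl | rfl <;> norm_num
  have hne : 1 - ε * c ≠ 0 := ne_of_gt (by linarith)
  have key : (1 - c ^ 2) * ((1 + ε * c) / (1 - ε * c)) = (1 + ε * c) ^ 2 := by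
    rw [mul_div_assoc', div_eq_iff hne]
    linear_combination ((1 + ε * c) * c ^ 2) * hε2
  rw [← Real.sqrt_mul (by nlinarith : (0:ℝ) ≤ 1 - c ^ 2), key,
    Real.sqrt_sq (by linarith : (0:ℝ) ≤ 1 + ε * c)]

lemma cos_image : Real.cos '' Set.Ioo 0 Real.pi = Set.Ioo (-1 : ℝ) 1 := by
  ext x
  constructor
  · rintro ⟨θ, ⟨h0, hπ⟩, rfl⟩
    constructor
    · have := Real.strictAntiOn_cos ⟨h0.le, hπ.le⟩ ⟨Real.pi_pos.le, le_refl _⟩ hπ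
      simpa using this
    · have := Real.strictAntiOn_cos ⟨le_refl _, Real.pi_pos.le⟩ ⟨h0.le, hπ.le⟩ h0
      simpa using this
  · rintro ⟨h1, h2⟩
    refine ⟨Real.arccos x, ⟨Real.arccos_pos.mpr h2, ?_⟩, Real.cos_arccos h1.le h2.le⟩
    rcases lt_or_eq_of_le (Real.arccos_le_pi x) with h | h
    · exact h
    · exfalso
      have : Real.cos (Real.arccos x) = -1 := by rw [h, Real.cos_pi]
      rw [Real.cos_arccos h1.le h2.le] at this
      linarith

lemma moment_eq {σ f : ℝ → ℂ} (hf : ∀ θ : ℝ, f (Real.cos θ) = σ θ)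
    (ε : ℝ) (hε : ε = 1 ∨ ε = -1) (N : ℕ) :
    (∫ x in (-1:ℝ)..1, (x:ℂ) ^ N * (f x * ((Real.sqrt ((1 + ε * x) / (1 - ε * x)) : ℝ) : ℂ)))
      = ∫ θ in (0:ℝ)..Real.pi,
          σ θ * (((1 + ε * Real.cos θ) * Real.cos θ ^ N : ℝ) : ℂ) := by
  have hderiv : ∀ θ ∈ Set.Ioo (0:ℝ) Real.pi,
      HasDerivWithinAt Real.cos (-Real.sin θ) (Set.Ioo 0 Real.pi) θ :=
    fun θ _ => (Real.hasDerivAt_cos θ).hasDerivWithinAt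
  have hinj : Set.InjOn Real.cos (Set.Ioo 0 Real.pi) :=
    Real.injOn_cos.mono Set.Ioo_subset_Icc_self
  rw [intervalIntegral.integral_of_le (by norm_num : (-1:ℝ) ≤ 1),
    MeasureTheory.integral_Ioc_eq_integral_Ioo, ← cos_image,
    MeasureTheory.integral_image_eq_integral_abs_deriv_smul measurableSet_Ioo hderiv hinj]
  rw [intervalIntegral.integral_of_le Real.pi_pos.le,
    MeasureTheory.integral_Ioc_eq_integral_Ioo]
  apply MeasureTheory.setIntegral_congr_fun measurableSet_Ioo
  intro θ ⟨h0, hπ⟩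
  have hsin : Real.sin θ = Real.sqrt (1 - Real.cos θ ^ 2) :=
    Real.sin_eq_sqrt_one_sub_cos_sq h0.le hπ.le
  have hc1 : -1 < Real.cos θ := by
    have := Real.strictAntiOn_cos ⟨h0.le, hπ.le⟩ ⟨Real.pi_pos.le, le_refl _⟩ hπ
    simpa using this
  have hc2 : Real.cos θ < 1 := by
    have := Real.strictAntiOn_cos ⟨le_refl _, Real.pi_pos.le⟩ ⟨h0.le, hπ.le⟩ h0
    simpa using this
  have hw : Real.sin θ * Real.sqrt ((1 + ε * Real.cos θ) / (1 - ε * Real.cos θ))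
      = 1 + ε * Real.cos θ := by
    rw [hsin]; exact sqrt_weight hε hc1 hc2
  simp only [abs_neg, abs_of_nonneg (Real.sin_nonneg_of_nonneg_of_le_pi h0.le hπ.le),
    Complex.real_smul]
  calc ((Real.sin θ : ℝ) : ℂ) * ((Real.cos θ : ℂ) ^ N * (f (Real.cos θ) *
        ((Real.sqrt ((1 + ε * Real.cos θ) / (1 - ε * Real.cos θ)) : ℝ) : ℂ)))
      = ((Real.sin θ * Real.sqrt ((1 + ε * Real.cos θ) / (1 - ε * Real.cos θ)) : ℝ) : ℂ)
          * ((Real.cos θ : ℂ) ^ N * σ θ) := by rw [hf θ]; push_cast; ring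
    _ = ((1 + ε * Real.cos θ : ℝ) : ℂ) * ((Real.cos θ : ℂ) ^ N * σ θ) := by rw [hw]
    _ = σ θ * (((1 + ε * Real.cos θ) * Real.cos θ ^ N : ℝ) : ℂ) := by push_cast; ring


lemma entry_eq {σ : ℝ → ℂ}
    (hint : IntervalIntegrable σ MeasureTheory.volume (-Real.pi) Real.pi)
    (hsym : ∀ θ : ℝ, σ (-θ) = σ θ) (P : ℕ → Polynomial ℝ) (ε : ℝ)
    (hkey : ∀ (j k : ℕ) (θ : ℝ),
      Real.cos (((j:ℝ) - k) * θ) + ε * Real.cos (((j:ℝ) + k + 1) * θ)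
        = (1 + ε * Real.cos θ) * ((P j).eval (Real.cos θ) * (P k).eval (Real.cos θ)))
    (j k : ℕ) :
    fourierCoeffZ σ ((j:ℤ) - k) + (ε:ℂ) * fourierCoeffZ σ ((j:ℤ) + k + 1)
      = (1 / (Real.pi : ℂ)) * ∫ θ in (0:ℝ)..Real.pi,
          σ θ * (((1 + ε * Real.cos θ) *
            ((P j).eval (Real.cos θ) * (P k).eval (Real.cos θ)) : ℝ) : ℂ) := by
  have hcont : Continuous fun θ : ℝ => (((1 + ε * Real.cos θ) *
      ((P j).eval (Real.cos θ) * (P k).eval (Real.cos θ)) : ℝ) : ℂ) := by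
    apply Complex.continuous_ofReal.comp
    exact (continuous_const.add (continuous_const.mul Real.continuous_cos)).mul
      (((P j).continuous.comp Real.continuous_cos).mul
        ((P k).continuous.comp Real.continuous_cos))
  have hg : IntervalIntegrable (fun θ => σ θ * (((1 + ε * Real.cos θ) *
      ((P j).eval (Real.cos θ) * (P k).eval (Real.cos θ)) : ℝ) : ℂ))
      MeasureTheory.volume (-Real.pi) Real.pi :=
    hint.mul_continuousOn hcont.continuousOn
  have hc1 : IntervalIntegrable
      (fun θ => σ θ * ((Real.cos (((((j:ℤ) - k : ℤ)):ℝ) * θ) : ℝ) : ℂ))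
      MeasureTheory.volume (-Real.pi) Real.pi :=
    hint.mul_continuousOn (Continuous.continuousOn (by fun_prop))
  have hc2 : IntervalIntegrable
      (fun θ => σ θ * ((Real.cos (((((j:ℤ) + k + 1 : ℤ)):ℝ) * θ) : ℝ) : ℂ))
      MeasureTheory.volume (-Real.pi) Real.pi :=
    hint.mul_continuousOn (Continuous.continuousOn (by fun_prop))
  rw [coeff_cos hint hsym, coeff_cos hint hsym]
  have hcomb : ∀ I₁ I₂ J : ℂ, I₁ + (ε:ℂ) * I₂ = 2 * J →
      (1 / (2 * (Real.pi : ℂ))) * I₁ + (ε:ℂ) * ((1 / (2 * (Real.pi : ℂ))) * I₂)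
        = (1 / (Real.pi : ℂ)) * J := by
    intro I₁ I₂ J h
    have hπ : (Real.pi : ℂ) ≠ 0 := Complex.ofReal_ne_zero.mpr Real.pi_ne_zero
    linear_combination (1 / (2 * (Real.pi : ℂ))) * h
  apply hcomb
  have hsum : (∫ θ in (-Real.pi)..Real.pi, σ θ * ((Real.cos (((((j:ℤ) - k : ℤ)):ℝ) * θ) : ℝ) : ℂ))
      + (ε:ℂ) * ∫ θ in (-Real.pi)..Real.pi, σ θ * ((Real.cos (((((j:ℤ) + k + 1 : ℤ)):ℝ) * θ) : ℝ) : ℂ)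
      = ∫ θ in (-Real.pi)..Real.pi, σ θ * (((1 + ε * Real.cos θ) *
          ((P j).eval (Real.cos θ) * (P k).eval (Real.cos θ)) : ℝ) : ℂ) := by
    rw [← intervalIntegral.integral_const_mul, ← intervalIntegral.integral_add hc1 (hc2.const_mul _)]
    apply intervalIntegral.integral_congr
    intro θ _
    simp only
    rw [← hkey j k θ]
    push_cast
    ring
  rw [hsum]
  apply integral_even Real.pi_pos.le hg
  intro θ
  simp [hsym θ, Real.cos_neg]


lemma master (K : ℕ) {σ f : ℝ → ℂ}
    (hint : IntervalIntegrable σ MeasureTheory.volume (-Real.pi) Real.pi)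
    (hsym : ∀ θ : ℝ, σ (-θ) = σ θ)
    (hf : ∀ θ : ℝ, f (Real.cos θ) = σ θ)
    (P : ℕ → Polynomial ℝ) (ε : ℝ) (hε : ε = 1 ∨ ε = -1)
    (hP : ∀ n : ℕ, (P n).coeff n = 2 ^ n ∧ ∀ m, n < m → (P n).coeff m = 0)
    (hkey : ∀ (j k : ℕ) (θ : ℝ),
      Real.cos (((j:ℝ) - k) * θ) + ε * Real.cos (((j:ℝ) + k + 1) * θ)
        = (1 + ε * Real.cos θ) * ((P j).eval (Real.cos θ) * (P k).eval (Real.cos θ))) :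
    Matrix.det (Matrix.of fun j k : Fin K =>
        fourierCoeffZ σ ((j : ℤ) - (k : ℤ)) + (ε:ℂ) * fourierCoeffZ σ ((j : ℤ) + (k : ℤ) + 1))
      = ((2 : ℂ) ^ (K ^ 2) / (2 * (Real.pi : ℂ)) ^ K) *
          hankelDet K (fun x => f x * ((Real.sqrt ((1 + ε * x) / (1 - ε * x)) : ℝ) : ℂ)) := by
  classical
  -- the coefficient matrix and the moment matrix
  set A : Matrix (Fin K) (Fin K) ℂ :=
    Matrix.of (fun j m : Fin K => (((P (j:ℕ)).coeff (m:ℕ) : ℝ) : ℂ)) with hA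
  set T : Matrix (Fin K) (Fin K) ℂ :=
    Matrix.of (fun m n : Fin K => ∫ θ in (0:ℝ)..Real.pi,
      σ θ * (((1 + ε * Real.cos θ) * Real.cos θ ^ ((m:ℕ) + (n:ℕ)) : ℝ) : ℂ)) with hT
  have hπ : (Real.pi : ℂ) ≠ 0 := Complex.ofReal_ne_zero.mpr Real.pi_ne_zero
  have hintO : IntervalIntegrable σ MeasureTheory.volume 0 Real.pi := by
    apply hint.mono_set
    apply Set.uIcc_subset_uIcc
    · exact Set.mem_uIcc.mpr (Or.inl ⟨neg_nonpos.mpr Real.pi_pos.le, Real.pi_pos.le⟩)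
    · exact Set.right_mem_uIcc
  have hbase : ∀ m n : ℕ, IntervalIntegrable
      (fun θ => σ θ * (((1 + ε * Real.cos θ) * Real.cos θ ^ (m + n) : ℝ) : ℂ))
      MeasureTheory.volume 0 Real.pi := fun m n =>
    hintO.mul_continuousOn (Continuous.continuousOn (by fun_prop))
  have hdeg : ∀ i : Fin K, (P (i:ℕ)).natDegree < K := fun i =>
    lt_of_le_of_lt (Polynomial.natDegree_le_iff_coeff_eq_zero.mpr (hP (i:ℕ)).2) i.isLt
  -- Step 1: the Toeplitz+Hankel matrix factors
  have hM : (Matrix.of fun j k : Fin K =>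
        fourierCoeffZ σ ((j : ℤ) - (k : ℤ)) + (ε:ℂ) * fourierCoeffZ σ ((j : ℤ) + (k : ℤ) + 1))
      = (1 / (Real.pi : ℂ)) • (A * T * A.transpose) := by
    ext j k
    show fourierCoeffZ σ ((j : ℤ) - (k : ℤ)) + (ε:ℂ) * fourierCoeffZ σ ((j : ℤ) + (k : ℤ) + 1)
      = _
    rw [entry_eq hint hsym P ε hkey (j:ℕ) (k:ℕ)]
    have hptwise : ∀ θ : ℝ, σ θ * (((1 + ε * Real.cos θ) *
        ((P (j:ℕ)).eval (Real.cos θ) * (P (k:ℕ)).eval (Real.cos θ)) : ℝ) : ℂ)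
        = ∑ m : Fin K, ∑ n : Fin K, (((P (j:ℕ)).coeff (m:ℕ) : ℝ) : ℂ) *
            ((((P (k:ℕ)).coeff (n:ℕ) : ℝ) : ℂ) *
              (σ θ * (((1 + ε * Real.cos θ) * Real.cos θ ^ ((m:ℕ) + (n:ℕ)) : ℝ) : ℂ))) := by
      intro θ
      rw [Polynomial.eval_eq_sum_range' (hdeg j), Polynomial.eval_eq_sum_range' (hdeg k)]
      rw [← Fin.sum_univ_eq_sum_range, ← Fin.sum_univ_eq_sum_range]
      push_cast
      rw [Finset.sum_mul_sum]
      simp only [Finset.mul_sum, Finset.sum_mul]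
      apply Finset.sum_congr rfl
      intro m _
      apply Finset.sum_congr rfl
      intro n _
      rw [pow_add]
      ring
    have hI : (∫ θ in (0:ℝ)..Real.pi, σ θ * (((1 + ε * Real.cos θ) *
        ((P (j:ℕ)).eval (Real.cos θ) * (P (k:ℕ)).eval (Real.cos θ)) : ℝ) : ℂ))
        = ∑ m : Fin K, ∑ n : Fin K, (((P (j:ℕ)).coeff (m:ℕ) : ℝ) : ℂ) *
            ((((P (k:ℕ)).coeff (n:ℕ) : ℝ) : ℂ) * T m n) := by
      have inner : ∀ m : Fin K, IntervalIntegrable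
          (fun θ => ∑ n : Fin K, (((P (j:ℕ)).coeff (m:ℕ) : ℝ) : ℂ) *
            ((((P (k:ℕ)).coeff (n:ℕ) : ℝ) : ℂ) *
              (σ θ * (((1 + ε * Real.cos θ) * Real.cos θ ^ ((m:ℕ) + (n:ℕ)) : ℝ) : ℂ))))
          MeasureTheory.volume 0 Real.pi := by
        intro m
        have h := IntervalIntegrable.sum (μ := MeasureTheory.volume) (a := (0:ℝ)) (b := Real.pi)
          (f := fun (n : Fin K) (θ : ℝ) => (((P (j:ℕ)).coeff (m:ℕ) : ℝ) : ℂ) *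
            ((((P (k:ℕ)).coeff (n:ℕ) : ℝ) : ℂ) *
              (σ θ * (((1 + ε * Real.cos θ) * Real.cos θ ^ ((m:ℕ) + (n:ℕ)) : ℝ) : ℂ))))
          Finset.univ
          (fun n _ => ((hbase (m:ℕ) (n:ℕ)).const_mul _).const_mul _)
        have heq : (∑ n : Fin K, fun (θ : ℝ) => (((P (j:ℕ)).coeff (m:ℕ) : ℝ) : ℂ) *
            ((((P (k:ℕ)).coeff (n:ℕ) : ℝ) : ℂ) *
              (σ θ * (((1 + ε * Real.cos θ) * Real.cos θ ^ ((m:ℕ) + (n:ℕ)) : ℝ) : ℂ))))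
            = fun θ => ∑ n : Fin K, (((P (j:ℕ)).coeff (m:ℕ) : ℝ) : ℂ) *
            ((((P (k:ℕ)).coeff (n:ℕ) : ℝ) : ℂ) *
              (σ θ * (((1 + ε * Real.cos θ) * Real.cos θ ^ ((m:ℕ) + (n:ℕ)) : ℝ) : ℂ))) := by
          funext θ; simp
        rwa [heq] at h
      rw [intervalIntegral.integral_congr (g := fun θ => ∑ m : Fin K, ∑ n : Fin K,
          (((P (j:ℕ)).coeff (m:ℕ) : ℝ) : ℂ) * ((((P (k:ℕ)).coeff (n:ℕ) : ℝ) : ℂ) *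
            (σ θ * (((1 + ε * Real.cos θ) * Real.cos θ ^ ((m:ℕ) + (n:ℕ)) : ℝ) : ℂ))))
          (fun θ _ => hptwise θ)]
      rw [intervalIntegral.integral_finset_sum (fun m _ => inner m)]
      apply Finset.sum_congr rfl
      intro m _
      rw [intervalIntegral.integral_finset_sum (s := Finset.univ)
        (f := fun (n : Fin K) (θ : ℝ) => (((P (j:ℕ)).coeff (m:ℕ) : ℝ) : ℂ) *
            ((((P (k:ℕ)).coeff (n:ℕ) : ℝ) : ℂ) *
              (σ θ * (((1 + ε * Real.cos θ) * Real.cos θ ^ ((m:ℕ) + (n:ℕ)) : ℝ) : ℂ))))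
        (fun n _ => ((hbase (m:ℕ) (n:ℕ)).const_mul _).const_mul _)]
      apply Finset.sum_congr rfl
      intro n _
      rw [intervalIntegral.integral_const_mul, intervalIntegral.integral_const_mul]
      simp only [hT, Matrix.of_apply]
    rw [hI]
    simp only [Matrix.smul_apply, Matrix.mul_apply, Matrix.transpose_apply, smul_eq_mul,
      Finset.mul_sum, Finset.sum_mul, hA, hT, Matrix.of_apply]
    rw [Finset.sum_comm]
    apply Finset.sum_congr rfl
    intro m _
    apply Finset.sum_congr rfl
    intro n _
    ring
  -- Step 2: determinant of A
  have hAtri : A.BlockTriangular OrderDual.toDual := by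
    intro i j hij
    have : (i:ℕ) < (j:ℕ) := hij
    simp only [hA, Matrix.of_apply]
    rw [(hP (i:ℕ)).2 (j:ℕ) this]
    simp
  have hdetA : A.det = ∏ i : Fin K, (2:ℂ) ^ (i:ℕ) := by
    rw [Matrix.det_of_lowerTriangular A hAtri]
    apply Finset.prod_congr rfl
    intro i _
    simp only [hA, Matrix.of_apply, (hP (i:ℕ)).1]
    push_cast
    ring
  have hdetA2 : A.det * A.det = (2:ℂ) ^ (K * (K - 1)) := by
    rw [hdetA, ← Finset.prod_mul_distrib]
    have : ∀ i : Fin K, (2:ℂ) ^ (i:ℕ) * (2:ℂ) ^ (i:ℕ) = (2:ℂ) ^ ((i:ℕ) * 2) := by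
      intro i; rw [← pow_add]; ring_nf
    simp only [this]
    rw [Finset.prod_pow_eq_pow_sum]
    congr 1
    rw [← Finset.sum_mul, Fin.sum_univ_eq_sum_range (fun i => i), Finset.sum_range_id_mul_two]
  -- Step 3: hankel determinant equals det T
  have hH : hankelDet K (fun x => f x * ((Real.sqrt ((1 + ε * x) / (1 - ε * x)) : ℝ) : ℂ))
      = T.det := by
    unfold hankelDet
    congr 1
    ext m n
    simp only [Matrix.of_apply, hT]
    exact moment_eq hf ε hε ((m:ℕ) + (n:ℕ))
  -- Step 4: put everything together
  rw [hM, Matrix.det_smul, Matrix.det_mul, Matrix.det_mul, Matrix.det_transpose, hH]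
  rw [Fintype.card_fin]
  have hKK : K * (K - 1) + K = K ^ 2 := by
    cases K with
    | zero => rfl
    | succ n => simp [Nat.succ_sub_one]; ring
  have hconst : (1 / (Real.pi : ℂ)) ^ K * (2:ℂ) ^ (K * (K - 1))
      = (2 : ℂ) ^ (K ^ 2) / (2 * (Real.pi : ℂ)) ^ K := by
    rw [mul_pow, ← hKK, pow_add]
    field_simp
    ring
    rw [← mul_pow, mul_inv_cancel₀ hπ, one_pow]
  calc (1 / (Real.pi : ℂ)) ^ K * (A.det * T.det * A.det)
      = ((1 / (Real.pi : ℂ)) ^ K * (A.det * A.det)) * T.det := by ring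
    _ = ((2 : ℂ) ^ (K ^ 2) / (2 * (Real.pi : ℂ)) ^ K) * T.det := by rw [hdetA2, hconst]


end DIKodd

/-- The two `odd` identities of Lemma 2.7 of Deift–Its–Krasovsky, relating
Toeplitz±Hankel determinants (integrals over `O⁻(2K+1)` and `O⁺(2K+1)`) to Hankel
determinants of moments of weights on `[-1,1]` under the substitution `x = cos θ`. -/
theorem dik_lemma_odd (K : ℕ) (hK : 0 < K) (σ : ℝ → ℂ) (f : ℝ → ℂ)
    (hper : Function.Periodic σ (2 * Real.pi))
    (hint : IntervalIntegrable σ volume (-Real.pi) Real.pi)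
    (hsym : ∀ θ : ℝ, σ (-θ) = σ θ)
    (hf : ∀ θ : ℝ, f (Real.cos θ) = σ θ) :
    Matrix.det (Matrix.of fun j k : Fin K =>
        fourierCoeffZ σ ((j : ℤ) - (k : ℤ)) + fourierCoeffZ σ ((j : ℤ) + (k : ℤ) + 1))
      = ((2 : ℂ) ^ (K ^ 2) / (2 * (Real.pi : ℂ)) ^ K) *
          hankelDet K (fun x => f x * ((Real.sqrt ((1 + x) / (1 - x)) : ℝ) : ℂ))
    ∧ Matrix.det (Matrix.of fun j k : Fin K =>
        fourierCoeffZ σ ((j : ℤ) - (k : ℤ)) - fourierCoeffZ σ ((j : ℤ) + (k : ℤ) + 1))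
      = ((2 : ℂ) ^ (K ^ 2) / (2 * (Real.pi : ℂ)) ^ K) *
          hankelDet K (fun x => f x * ((Real.sqrt ((1 - x) / (1 + x)) : ℝ) : ℂ)) := by
  constructor
  · have h := DIKodd.master K hint hsym hf DIKodd.Vp 1 (Or.inl rfl) DIKodd.Vp_coeff
      (DIKodd.key_plus)
    simp only [Complex.ofReal_one, one_mul] at h
    exact h
  · have h := DIKodd.master K hint hsym hf DIKodd.Wp (-1) (Or.inr rfl) DIKodd.Wp_coeff
      (DIKodd.key_minus)
    simp only [Complex.ofReal_neg, Complex.ofReal_one, neg_one_mul, neg_mul, one_mul,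
      ← sub_eq_add_neg, sub_neg_eq_add] at h
    exact h
end

section
/- Let v be a real number with -1 < v < 1, set r = √((1+v)/(1-v)), and for φ ∈ ℝ let z = r e^{iφ}. Then (z + z^{-1}) - v (z - z^{-1}) = 2 √(1 - v²) cos φ. In particular, along the circle of radius r centered at the origin the complexified Gross–Witten potential (z + z^{-1}) - v(z - z^{-1}) is real-valued and equals the symmetric Gross–Witten potential rescaled by √(1-v²). -/
/-- Along the circle of radius `√((1+v)/(1-v))`, the complexified Gross–Witten potential
`(z + z⁻¹) - v(z - z⁻¹)` is real-valued and equals `2√(1-v²) cos φ`. -/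
theorem gross_witten_deformed_contour (v : ℝ) (hv1 : -1 < v) (hv2 : v < 1) (φ : ℝ) :
    (((Real.sqrt ((1 + v) / (1 - v)) : ℝ) : ℂ) * Complex.exp (Complex.I * (φ : ℂ))
          + (((Real.sqrt ((1 + v) / (1 - v)) : ℝ) : ℂ) * Complex.exp (Complex.I * (φ : ℂ)))⁻¹)
        - (v : ℂ) *
          (((Real.sqrt ((1 + v) / (1 - v)) : ℝ) : ℂ) * Complex.exp (Complex.I * (φ : ℂ))
            - (((Real.sqrt ((1 + v) / (1 - v)) : ℝ) : ℂ) * Complex.exp (Complex.I * (φ : ℂ)))⁻¹)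
      = ((2 * Real.sqrt (1 - v ^ 2) * Real.cos φ : ℝ) : ℂ) := by
  have h1 : (0:ℝ) < 1 - v := by linarith
  have h2 : (0:ℝ) < 1 + v := by linarith
  set s : ℝ := Real.sqrt ((1 + v) / (1 - v)) with hsdef
  have hspos : 0 < s := Real.sqrt_pos.mpr (by positivity)
  have hA : (1 - v) * s = Real.sqrt (1 - v ^ 2) := by
    rw [hsdef]
    nth_rw 1 [← Real.sqrt_sq h1.le]
    rw [← Real.sqrt_mul (by positivity)]
    congr 1
    field_simp
    ring
  have hB : (1 + v) * s⁻¹ = Real.sqrt (1 - v ^ 2) := by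
    rw [hsdef, ← Real.sqrt_inv]
    nth_rw 1 [← Real.sqrt_sq h2.le]
    rw [← Real.sqrt_mul (by positivity)]
    congr 1
    field_simp
    ring
  have hA' : ((1:ℂ) - (v:ℂ)) * (s:ℂ) = ((Real.sqrt (1 - v ^ 2) : ℝ) : ℂ) := by
    exact_mod_cast congrArg (fun x : ℝ => (x : ℂ)) hA
  have hB' : ((1:ℂ) + (v:ℂ)) * (s:ℂ)⁻¹ = ((Real.sqrt (1 - v ^ 2) : ℝ) : ℂ) := by
    exact_mod_cast congrArg (fun x : ℝ => (x : ℂ)) hB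
  have hs0 : (s:ℂ) ≠ 0 := by exact_mod_cast hspos.ne'
  have hE0 : Complex.exp (Complex.I * (φ:ℂ)) ≠ 0 := Complex.exp_ne_zero _
  have hcos : Complex.exp (Complex.I * (φ:ℂ)) + Complex.exp (-(Complex.I * (φ:ℂ)))
      = 2 * Complex.cos (φ:ℂ) := by
    rw [Complex.cos]
    ring_nf
  rw [mul_inv, ← Complex.exp_neg, Complex.ofReal_mul, Complex.ofReal_mul,
    Complex.ofReal_cos]
  push_cast
  linear_combination Complex.exp (Complex.I * (φ:ℂ)) * hA'
    + Complex.exp (-(Complex.I * (φ:ℂ))) * hB'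
    + ((Real.sqrt (1 - v ^ 2) : ℝ) : ℂ) * hcos
end

section
/- Let 0 < t < 1 and γ > 0, and define ρ_H(φ) = (1/2π) · [ 1 + 2γt (cos φ - t) / (1 + t² - 2t cos φ) ] for φ ∈ [-π, π]. Then ρ_H(φ) ≥ 0 for all φ ∈ [-π, π] if and only if γ ≤ (1+t)/(2t). -/
/-- The weak-coupling eigenvalue density of the symmetric H-model,
`ρ_H(φ) = (1/2π)[1 + 2γt(cos φ - t)/(1 + t² - 2t cos φ)]`, is nonnegative on `[-π, π]`
if and only if `γ ≤ (1+t)/(2t)`. -/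
theorem hmodel_density_nonneg_iff (t γ : ℝ) (ht0 : 0 < t) (ht1 : t < 1) (hγ : 0 < γ) :
    (∀ φ ∈ Set.Icc (-Real.pi) Real.pi,
        0 ≤ (1 / (2 * Real.pi)) *
          (1 + 2 * γ * t * (Real.cos φ - t) / (1 + t ^ 2 - 2 * t * Real.cos φ)))
      ↔ γ ≤ (1 + t) / (2 * t) := by
  have hπ := Real.pi_pos
  have hcoef : (0:ℝ) < 1 / (2 * Real.pi) := by positivity
  constructor
  · intro h
    have hmem : Real.pi ∈ Set.Icc (-Real.pi) Real.pi := ⟨by linarith, le_refl _⟩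
    have h1 := h Real.pi hmem
    rw [Real.cos_pi] at h1
    have hX : 0 ≤ 1 + 2 * γ * t * (-1 - t) / (1 + t ^ 2 - 2 * t * (-1)) :=
      by
        by_contra h'
        push_neg at h'
        nlinarith [mul_pos hcoef (neg_pos.mpr h')]
    have hD : (0:ℝ) < 1 + t ^ 2 - 2 * t * (-1) := by nlinarith
    have hX2 : 0 ≤ (1 + t ^ 2 - 2 * t * (-1)) + 2 * γ * t * (-1 - t) := by
      have h3 : (-1:ℝ) ≤ 2 * γ * t * (-1 - t) / (1 + t ^ 2 - 2 * t * (-1)) := by linarith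
      have h4 := (le_div_iff₀ hD).mp h3
      linarith
    rw [le_div_iff₀ (by positivity : (0:ℝ) < 2 * t)]
    nlinarith
  · intro hγle φ hφ
    have hc1 : -1 ≤ Real.cos φ := Real.neg_one_le_cos φ
    have hc2 : Real.cos φ ≤ 1 := Real.cos_le_one φ
    set c := Real.cos φ
    have hD : (0:ℝ) < 1 + t ^ 2 - 2 * t * c := by nlinarith
    have h2γt : 2 * γ * t ≤ 1 + t := by
      rw [le_div_iff₀ (by positivity : (0:ℝ) < 2 * t)] at hγle
      nlinarith
    have hnum : 0 ≤ (1 + t ^ 2 - 2 * t * c) + 2 * γ * t * (c - t) := by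
      rcases le_or_gt t c with hct | hct
      · nlinarith [mul_nonneg (by positivity : (0:ℝ) ≤ 2 * γ * t) (sub_nonneg.mpr hct)]
      · nlinarith [mul_nonneg (sub_nonneg.mpr h2γt) (le_of_lt (sub_pos.mpr hct))]
    have hkey : 1 + 2 * γ * t * (c - t) / (1 + t ^ 2 - 2 * t * c)
        = ((1 + t ^ 2 - 2 * t * c) + 2 * γ * t * (c - t)) / (1 + t ^ 2 - 2 * t * c) := by
      field_simp
    rw [hkey]
    exact mul_nonneg hcoef.le (div_nonneg hnum hD.le)
end

section
/- Let 0 < t < 1 and γ > 0, and define ρ_E(φ) = (1/2π) · [ 1 + 2γt (cos φ + t) / (1 + t² + 2t cos φ) ] for φ ∈ [-π, π]. Then ρ_E(φ) ≥ 0 for all φ ∈ [-π, π] if and only if γ ≤ (1-t)/(2t). -/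
/-- The weak-coupling eigenvalue density of the symmetric E-model,
`ρ_E(φ) = (1/2π)[1 + 2γt(cos φ + t)/(1 + t² + 2t cos φ)]`, is nonnegative on `[-π, π]`
if and only if `γ ≤ (1-t)/(2t)`. -/
theorem emodel_density_nonneg_iff (t γ : ℝ) (ht0 : 0 < t) (ht1 : t < 1) (hγ : 0 < γ) :
    (∀ φ ∈ Set.Icc (-Real.pi) Real.pi,
        0 ≤ (1 / (2 * Real.pi)) *
          (1 + 2 * γ * t * (Real.cos φ + t) / (1 + t ^ 2 + 2 * t * Real.cos φ)))
      ↔ γ ≤ (1 - t) / (2 * t) := by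
  have hpi : 0 < 2 * Real.pi := by positivity
  have hinv : (0:ℝ) < 1 / (2 * Real.pi) := by positivity
  constructor
  · intro h
    have hπ : Real.pi ∈ Set.Icc (-Real.pi) Real.pi :=
      ⟨by linarith [Real.pi_pos], le_refl _⟩
    have h1 := h Real.pi hπ
    rw [Real.cos_pi] at h1
    have h2 : 0 ≤ 1 + 2 * γ * t * (-1 + t) / (1 + t ^ 2 + 2 * t * -1) :=
      nonneg_of_mul_nonneg_right h1 hinv
    have hd : 1 + t ^ 2 + 2 * t * -1 = (1 - t) ^ 2 := by ring
    rw [hd] at h2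
    have hne : (0:ℝ) < (1 - t) ^ 2 := pow_pos (by linarith) 2
    have h3 : 0 ≤ (1 - t) ^ 2 + 2 * γ * t * (-1 + t) := by
      have h4 := mul_nonneg hne.le h2
      rw [mul_add, mul_one, mul_div_cancel₀ _ hne.ne'] at h4
      exact h4
    rw [le_div_iff₀ (by positivity : (0:ℝ) < 2 * t)]
    nlinarith
  · intro hγle φ _
    have hc := Real.neg_one_le_cos φ
    have hc2 := Real.cos_le_one φ
    set c := Real.cos φ
    have hD : (0:ℝ) < 1 + t ^ 2 + 2 * t * c := by nlinarith
    apply mul_nonneg hinv.le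
    have key : 0 ≤ (1 + t ^ 2 + 2 * t * c) + 2 * γ * t * (c + t) := by
      rcases le_or_gt 0 (c + t) with h | h
      · nlinarith [mul_nonneg (mul_nonneg (mul_nonneg (by norm_num : (0:ℝ) ≤ 2) hγ.le) ht0.le) h]
      · have hγt : 2 * γ * t ≤ 1 - t := by
          have := (le_div_iff₀ (by positivity : (0:ℝ) < 2 * t)).mp hγle
          nlinarith
        nlinarith [mul_nonneg (by linarith : (0:ℝ) ≤ 1 + t) (by linarith : (0:ℝ) ≤ 1 + c)]
    have heq : 1 + 2 * γ * t * (c + t) / (1 + t ^ 2 + 2 * t * c)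
        = ((1 + t ^ 2 + 2 * t * c) + 2 * γ * t * (c + t)) / (1 + t ^ 2 + 2 * t * c) := by
      field_simp
    rw [heq]
    exact div_nonneg key hD.le
end

section
/- Let 0 < t < 1 and γ > (1+t)/(2t), and suppose φ₀ ∈ (0, π) satisfies sin²(φ₀/2) = (1-t)²(2γ-1) / (4t(γ-1)²). Then ( 2(γ-1)t / π ) · ∫_{-φ₀}^{φ₀} [ cos(φ/2) / ( (1-t)² + 4t sin²(φ/2) ) ] · √( sin²(φ₀/2) - sin²(φ/2) ) dφ = 1. -/
set_option maxHeartbeats 1000000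

/-- Normalization of the strong-coupling (gapped) eigenvalue density of the symmetric
H-model: with the endpoint `φ₀` determined by
`sin²(φ₀/2) = (1-t)²(2γ-1)/(4t(γ-1)²)`, the density has total mass one. -/
theorem hmodel_strong_coupling_density_normalized (t γ φ₀ : ℝ)
    (ht0 : 0 < t) (ht1 : t < 1) (hγ : (1 + t) / (2 * t) < γ)
    (hφ : φ₀ ∈ Set.Ioo 0 Real.pi)
    (hφ0 : Real.sin (φ₀ / 2) ^ 2 = (1 - t) ^ 2 * (2 * γ - 1) / (4 * t * (γ - 1) ^ 2)) :
    (2 * (γ - 1) * t / Real.pi) *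
        ∫ φ in (-φ₀)..φ₀,
          (Real.cos (φ / 2) / ((1 - t) ^ 2 + 4 * t * Real.sin (φ / 2) ^ 2)) *
            Real.sqrt (Real.sin (φ₀ / 2) ^ 2 - Real.sin (φ / 2) ^ 2)
      = 1 := by
  obtain ⟨hφp, hφπ⟩ := hφ
  have hπ := Real.pi_pos
  have hst : 0 < Real.sqrt t := Real.sqrt_pos.mpr ht0
  have hγ1 : 1 < γ := lt_of_le_of_lt (by rw [le_div_iff₀ (by linarith)]; nlinarith) hγ
  set a := Real.sin (φ₀ / 2) with ha
  have ha0 : 0 < a := Real.sin_pos_of_pos_of_lt_pi (by linarith) (by linarith)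
  set c := (1 - t) / (2 * Real.sqrt t) with hcdef
  have hc0 : 0 < c := div_pos (by linarith) (by linarith)
  have hc2 : c ^ 2 = (1 - t) ^ 2 / (4 * t) := by
    rw [hcdef, div_pow, mul_pow, Real.sq_sqrt ht0.le]; ring_nf
  set q := γ * c / (γ - 1) with hqdef
  have hq0 : 0 < q := div_pos (mul_pos (by linarith) hc0) (by linarith)
  clear_value a c q
  have hq2 : q ^ 2 = a ^ 2 + c ^ 2 := by
    have hγne : γ - 1 ≠ 0 := by linarith
    have htne : t ≠ 0 := ht0.ne'
    rw [hqdef, div_pow, mul_pow, hc2, hφ0]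
    field_simp
    ring
  set F : ℝ → ℝ := fun x =>
    (1 / (2 * t)) *
      ((q / c) * Real.arcsin (q * Real.sin (x / 2) /
          (a * Real.sqrt (c ^ 2 + Real.sin (x / 2) ^ 2))) -
        Real.arcsin (Real.sin (x / 2) / a)) with hF
  set g : ℝ → ℝ := fun φ =>
    (Real.cos (φ / 2) / ((1 - t) ^ 2 + 4 * t * Real.sin (φ / 2) ^ 2)) *
      Real.sqrt (a ^ 2 - Real.sin (φ / 2) ^ 2) with hg
  have hFc : Continuous F := by
    apply Continuous.mul continuous_const
    apply Continuous.sub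
    · apply Continuous.mul continuous_const
      apply Real.continuous_arcsin.comp
      apply Continuous.div (by fun_prop) (by fun_prop)
      intro x
      have h1 : 0 < Real.sqrt (c ^ 2 + Real.sin (x / 2) ^ 2) :=
        Real.sqrt_pos.mpr (by positivity)
      positivity
    · exact Real.continuous_arcsin.comp (by fun_prop)
  have hgc : Continuous g := by
    apply Continuous.mul
    · apply Continuous.div (by fun_prop) (by fun_prop)
      intro x
      have h1 : (0:ℝ) < (1 - t) ^ 2 := pow_pos (by linarith) 2
      nlinarith [sq_nonneg (Real.sin (x / 2)), mul_nonneg ht0.le (sq_nonneg (Real.sin (x / 2)))]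
    · fun_prop
  have hderiv : ∀ x ∈ Set.Ioo (-φ₀) φ₀, HasDerivAt F (g x) x := by
    intro x hx
    obtain ⟨hx1, hx2⟩ := hx
    have hu1 : Real.sin (x / 2) < a := by
      rw [ha]
      exact Real.sin_lt_sin_of_lt_of_le_pi_div_two (by linarith) (by linarith) (by linarith)
    have hu2 : -a < Real.sin (x / 2) := by
      have h := Real.sin_lt_sin_of_lt_of_le_pi_div_two (x := -(φ₀ / 2)) (y := x / 2)
        (by linarith) (by linarith) (by linarith)
      rw [Real.sin_neg, ← ha] at h; exact h
    set u := Real.sin (x / 2) with huu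
    have hua : u ^ 2 < a ^ 2 := by nlinarith
    have hS1p : (0:ℝ) < c ^ 2 + u ^ 2 := by positivity
    have hS2p : (0:ℝ) < a ^ 2 - u ^ 2 := by linarith
    set S1 := Real.sqrt (c ^ 2 + u ^ 2) with hS1def
    set S2 := Real.sqrt (a ^ 2 - u ^ 2) with hS2def
    have hS1 : 0 < S1 := Real.sqrt_pos.mpr hS1p
    have hS2 : 0 < S2 := Real.sqrt_pos.mpr hS2p
    have hS1sq : S1 ^ 2 = c ^ 2 + u ^ 2 := Real.sq_sqrt hS1p.le
    have hS2sq : S2 ^ 2 = a ^ 2 - u ^ 2 := Real.sq_sqrt hS2p.le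
    have hsin : HasDerivAt (fun y => Real.sin (y / 2)) (Real.cos (x / 2) * (1 / 2)) x :=
      (Real.hasDerivAt_sin (x / 2)).comp (h := fun y => y / 2) x ((hasDerivAt_id' x).div_const 2)
    set d := Real.cos (x / 2) * (1 / 2) with hd
    have hden0 : HasDerivAt (fun y => c ^ 2 + Real.sin (y / 2) ^ 2) (2 * u * d) x := by
      have := ((hsin.pow 2).const_add (c ^ 2))
      simpa using this
    have hsqrt : HasDerivAt (fun y => Real.sqrt (c ^ 2 + Real.sin (y / 2) ^ 2))
        ((2 * u * d) / (2 * S1)) x := hden0.sqrt (by positivity)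
    have hnum : HasDerivAt (fun y => q * Real.sin (y / 2)) (q * d) x := hsin.const_mul q
    have hdenS : HasDerivAt (fun y => a * Real.sqrt (c ^ 2 + Real.sin (y / 2) ^ 2))
        (a * ((2 * u * d) / (2 * S1))) x := hsqrt.const_mul a
    have hdiv : HasDerivAt
        (fun y => q * Real.sin (y / 2) / (a * Real.sqrt (c ^ 2 + Real.sin (y / 2) ^ 2)))
        ((q * d * (a * S1) - q * u * (a * ((2 * u * d) / (2 * S1)))) / (a * S1) ^ 2)
        x := hnum.div hdenS (by positivity)
    set X := q * u / (a * S1) with hX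
    have hX2 : X ^ 2 < 1 := by
      rw [hX, div_pow, mul_pow, mul_pow, hS1sq]
      rw [div_lt_one (by positivity)]
      nlinarith [hq2, mul_pos (pow_pos hc0 2) hS2p]
    have hXne1 : X ≠ 1 := by intro h; rw [h] at hX2; norm_num at hX2
    have hXnem1 : X ≠ -1 := by intro h; rw [h] at hX2; norm_num at hX2
    have harc1 : HasDerivAt
        (fun y => Real.arcsin (q * Real.sin (y / 2) /
          (a * Real.sqrt (c ^ 2 + Real.sin (y / 2) ^ 2))))
        ((1 / Real.sqrt (1 - X ^ 2)) *
          ((q * d * (a * S1) - q * u * (a * ((2 * u * d) / (2 * S1)))) / (a * S1) ^ 2))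
        x := (Real.hasDerivAt_arcsin hXnem1 hXne1).comp (h := fun y => q * Real.sin (y / 2) /
          (a * Real.sqrt (c ^ 2 + Real.sin (y / 2) ^ 2))) x hdiv
    have hUa2 : (u / a) ^ 2 < 1 := by
      rw [div_pow, div_lt_one (by positivity)]; exact hua
    have hUne1 : u / a ≠ 1 := by intro h; rw [h] at hUa2; norm_num at hUa2
    have hUnem1 : u / a ≠ -1 := by intro h; rw [h] at hUa2; norm_num at hUa2
    have harc2 : HasDerivAt (fun y => Real.arcsin (Real.sin (y / 2) / a))
        ((1 / Real.sqrt (1 - (u / a) ^ 2)) * (d / a)) x :=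
      (Real.hasDerivAt_arcsin hUnem1 hUne1).comp (h := fun y => Real.sin (y / 2) / a) x (hsin.div_const a)
    have hFd : HasDerivAt F
        ((1 / (2 * t)) * ((q / c) * ((1 / Real.sqrt (1 - X ^ 2)) *
          ((q * d * (a * S1) - q * u * (a * ((2 * u * d) / (2 * S1)))) / (a * S1) ^ 2))
          - ((1 / Real.sqrt (1 - (u / a) ^ 2)) * (d / a)))) x :=
      ((harc1.const_mul (q / c)).sub harc2).const_mul (1 / (2 * t))
    clear_value u S1 S2 d X
    have hs1 : Real.sqrt (1 - (u / a) ^ 2) = S2 / a := by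
      rw [show (1 : ℝ) - (u / a) ^ 2 = (S2 / a) ^ 2 by
        rw [div_pow, div_pow, hS2sq]; field_simp]
      exact Real.sqrt_sq (by positivity)
    have hs2 : Real.sqrt (1 - X ^ 2) = c * S2 / (a * S1) := by
      rw [show (1 : ℝ) - X ^ 2 = (c * S2 / (a * S1)) ^ 2 by
        rw [hX]
        field_simp
        linear_combination a ^ 2 * hS1sq - u ^ 2 * hq2 - c ^ 2 * hS2sq]
      exact Real.sqrt_sq (by positivity)
    have hq2' : q ^ 2 = S1 ^ 2 + S2 ^ 2 := by rw [hS1sq, hS2sq]; linarith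
    have hDval : (q * d * (a * S1) - q * u * (a * ((2 * u * d) / (2 * S1)))) / (a * S1) ^ 2
        = q * d * c ^ 2 / (a * S1 ^ 3) := by
      rw [mul_pow]
      field_simp
      linear_combination d * hS1sq
    have heq : (1 / (2 * t)) * ((q / c) * ((1 / Real.sqrt (1 - X ^ 2)) *
          ((q * d * (a * S1) - q * u * (a * ((2 * u * d) / (2 * S1)))) / (a * S1) ^ 2))
          - ((1 / Real.sqrt (1 - (u / a) ^ 2)) * (d / a))) = g x := by
      rw [hs1, hs2, hDval, hg]
      simp only [← huu]
      rw [← hS2def]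
      have h4t : (1 - t) ^ 2 + 4 * t * u ^ 2 = 4 * t * (S1 ^ 2) := by
        rw [hS1sq, hc2]; field_simp
      rw [h4t, show Real.cos (x / 2) = 2 * d by rw [hd]; ring]
      field_simp
      linear_combination 4 * d * hq2'
    rw [← heq]
    exact hFd
  have hint : IntervalIntegrable g MeasureTheory.volume (-φ₀) φ₀ :=
    hgc.intervalIntegrable _ _
  have hI : ∫ φ in (-φ₀)..φ₀, g φ = F φ₀ - F (-φ₀) :=
    intervalIntegral.integral_eq_sub_of_hasDerivAt_of_le (by linarith)
      hFc.continuousOn hderiv hint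
  have hsqca : Real.sqrt (c ^ 2 + a ^ 2) = q := by
    rw [show c ^ 2 + a ^ 2 = q ^ 2 by linarith [hq2]]
    exact Real.sqrt_sq hq0.le
  have hFpos : F φ₀ = (1 / (2 * t)) * ((q / c) * (Real.pi / 2) - Real.pi / 2) := by
    simp only [hF, ← ha]
    rw [hsqca, show q * a / (a * q) = 1 by field_simp, div_self ha0.ne',
      Real.arcsin_one]
  have hFneg : F (-φ₀) = (1 / (2 * t)) * ((q / c) * (-(Real.pi / 2)) + Real.pi / 2) := by
    simp only [hF, show -φ₀ / 2 = -(φ₀ / 2) by ring, Real.sin_neg, ← ha]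
    rw [show (-a) ^ 2 = a ^ 2 by ring, hsqca,
      show q * -a / (a * q) = -1 by field_simp,
      show -a / a = -1 by field_simp, Real.arcsin_neg_one]
    ring
  have hqc : q / c = γ / (γ - 1) := by
    rw [hqdef]; field_simp
  have h2 : γ - 1 ≠ 0 := by linarith
  rw [hI, hFpos, hFneg, hqc]
  field_simp
  ring
end

section
/- Fix γ > 0, and for 0 < t < 1 define F_w(t) = -γ² log(1 - t²) and F_s(t) = -(2γ - 1) log(1 - t) - (1/2) log t. Then at every point t ∈ (0,1) with γ = (1+t)/(2t) one has F_w'(t) = F_s'(t) and F_w''(t) = F_s''(t), while F_w'''(t) - F_s'''(t) = 1 / ( t³ (1 - t²) ). -/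
open Real Filter Set

private lemma nz (s : ℝ) (hs : s ∈ Set.Ioo (0:ℝ) 1) :
    s ≠ 0 ∧ (1 - s) ≠ 0 ∧ (1 + s) ≠ 0 ∧ (1 - s^2) ≠ 0 := by
  obtain ⟨h0, h1⟩ := hs
  refine ⟨ne_of_gt h0, sub_ne_zero.2 (ne_of_gt h1), by positivity, ?_⟩
  have : 1 - s^2 = (1-s)*(1+s) := by ring
  rw [this]
  exact mul_ne_zero (sub_ne_zero.2 (ne_of_gt h1)) (by positivity)

private lemma hw1 (γ : ℝ) (s : ℝ) (hs : s ∈ Set.Ioo (0:ℝ) 1) :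
    HasDerivAt (fun s : ℝ => -γ ^ 2 * Real.log (1 - s ^ 2))
      (2*γ^2*s/(1-s^2)) s := by
  obtain ⟨h0, h1, h2, h3⟩ := nz s hs
  have hin : HasDerivAt (fun s : ℝ => 1 - s^2) (-(2*s)) s := by
    simpa using (hasDerivAt_pow 2 s).const_sub 1
  have := ((Real.hasDerivAt_log h3).comp s hin).const_mul (-γ^2)
  refine this.congr_deriv ?_
  field_simp
  try ring

private lemma hw2 (γ : ℝ) (s : ℝ) (hs : s ∈ Set.Ioo (0:ℝ) 1) :
    HasDerivAt (fun s : ℝ => 2*γ^2*s/(1-s^2))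
      (2*γ^2*(1+s^2)/(1-s^2)^2) s := by
  obtain ⟨h0, h1, h2, h3⟩ := nz s hs
  have hnum : HasDerivAt (fun s : ℝ => 2*γ^2*s) (2*γ^2) s := by
    simpa using (hasDerivAt_id s).const_mul (2*γ^2)
  have hden : HasDerivAt (fun s : ℝ => 1 - s^2) (-(2*s)) s := by
    simpa using (hasDerivAt_pow 2 s).const_sub 1
  have := hnum.div hden h3
  refine this.congr_deriv ?_
  field_simp
  try ring

private lemma hw3 (γ : ℝ) (s : ℝ) (hs : s ∈ Set.Ioo (0:ℝ) 1) :
    HasDerivAt (fun s : ℝ => 2*γ^2*(1+s^2)/(1-s^2)^2)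
      (2*γ^2*(2*s*(3+s^2))/(1-s^2)^3) s := by
  obtain ⟨h0, h1, h2, h3⟩ := nz s hs
  have hnum : HasDerivAt (fun s : ℝ => 2*γ^2*(1+s^2)) (2*γ^2*(2*s)) s := by
    simpa using (((hasDerivAt_pow 2 s).const_add 1).const_mul (2*γ^2))
  have hden0 : HasDerivAt (fun s : ℝ => 1 - s^2) (-(2*s)) s := by
    simpa using (hasDerivAt_pow 2 s).const_sub 1
  have hden : HasDerivAt (fun s : ℝ => (1 - s^2)^2) (2*(1-s^2)^1*(-(2*s))) s := by
    simpa using hden0.fun_pow 2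
  have := hnum.div hden (pow_ne_zero 2 h3)
  refine this.congr_deriv ?_
  field_simp
  try ring

private lemma hs1 (γ : ℝ) (s : ℝ) (hs : s ∈ Set.Ioo (0:ℝ) 1) :
    HasDerivAt (fun s : ℝ => -(2 * γ - 1) * Real.log (1 - s) - (1 / 2) * Real.log s)
      ((2*γ-1)/(1-s) - 1/(2*s)) s := by
  obtain ⟨h0, h1, h2, h3⟩ := nz s hs
  have hin : HasDerivAt (fun s : ℝ => 1 - s) (-1 : ℝ) s := by
    simpa using (hasDerivAt_id s).const_sub 1
  have ha := ((Real.hasDerivAt_log h1).comp s hin).const_mul (-(2*γ-1))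
  have hb := (Real.hasDerivAt_log h0).const_mul (1/2 : ℝ)
  have := ha.sub hb
  refine this.congr_deriv ?_
  field_simp
  try ring

private lemma hs2 (γ : ℝ) (s : ℝ) (hs : s ∈ Set.Ioo (0:ℝ) 1) :
    HasDerivAt (fun s : ℝ => (2*γ-1)/(1-s) - 1/(2*s))
      ((2*γ-1)/(1-s)^2 + 1/(2*s^2)) s := by
  obtain ⟨h0, h1, h2, h3⟩ := nz s hs
  have hd1 : HasDerivAt (fun s : ℝ => 1 - s) (-1 : ℝ) s := by
    simpa using (hasDerivAt_id s).const_sub 1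
  have ha := (hasDerivAt_const s (2*γ-1)).div hd1 h1
  have hd2 : HasDerivAt (fun s : ℝ => 2*s) (2 : ℝ) s := by
    simpa using (hasDerivAt_id s).const_mul (2:ℝ)
  have hb := (hasDerivAt_const s (1:ℝ)).div hd2 (by simpa using h0)
  have := ha.sub hb
  refine this.congr_deriv ?_
  field_simp
  try ring

private lemma hs3 (γ : ℝ) (s : ℝ) (hs : s ∈ Set.Ioo (0:ℝ) 1) :
    HasDerivAt (fun s : ℝ => (2*γ-1)/(1-s)^2 + 1/(2*s^2))
      (2*(2*γ-1)/(1-s)^3 - 1/s^3) s := by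
  obtain ⟨h0, h1, h2, h3⟩ := nz s hs
  have hd0 : HasDerivAt (fun s : ℝ => 1 - s) (-1 : ℝ) s := by
    simpa using (hasDerivAt_id s).const_sub 1
  have hd1 : HasDerivAt (fun s : ℝ => (1 - s)^2) (2*(1-s)^1*(-1)) s := by
    simpa using hd0.fun_pow 2
  have ha := (hasDerivAt_const s (2*γ-1)).div hd1 (pow_ne_zero 2 h1)
  have hd2 : HasDerivAt (fun s : ℝ => 2*s^2) (2*(2*s)) s := by
    simpa [mul_comm] using (hasDerivAt_pow 2 s).const_mul (2:ℝ)
  have hb := (hasDerivAt_const s (1:ℝ)).div hd2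
    (mul_ne_zero two_ne_zero (pow_ne_zero 2 h0))
  have := ha.add hb
  refine this.congr_deriv ?_
  field_simp
  try ring

private lemma deriv_ev {f g : ℝ → ℝ} {t : ℝ} (ht : t ∈ Set.Ioo (0:ℝ) 1)
    (h : ∀ s ∈ Set.Ioo (0:ℝ) 1, HasDerivAt f (g s) s) :
    deriv f =ᶠ[nhds t] g :=
  Filter.eventuallyEq_of_mem (isOpen_Ioo.mem_nhds ht) (fun s hs => (h s hs).deriv)

/-- Third-order phase transition of the symmetric H-model: across the critical curve
`γ = (1+t)/(2t)` the weak- and strong-coupling free energies agree to second order in `t`,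
while the third `t`-derivatives jump by `1/(t³(1-t²))`. -/
theorem hmodel_third_order_transition (γ : ℝ) (hγ : 0 < γ) (t : ℝ)
    (ht : t ∈ Set.Ioo (0 : ℝ) 1) (hc : γ = (1 + t) / (2 * t)) :
    deriv (fun s : ℝ => -γ ^ 2 * Real.log (1 - s ^ 2)) t
        = deriv (fun s : ℝ => -(2 * γ - 1) * Real.log (1 - s) - (1 / 2) * Real.log s) t
    ∧ iteratedDeriv 2 (fun s : ℝ => -γ ^ 2 * Real.log (1 - s ^ 2)) t
        = iteratedDeriv 2
            (fun s : ℝ => -(2 * γ - 1) * Real.log (1 - s) - (1 / 2) * Real.log s) t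
    ∧ iteratedDeriv 3 (fun s : ℝ => -γ ^ 2 * Real.log (1 - s ^ 2)) t
        - iteratedDeriv 3
            (fun s : ℝ => -(2 * γ - 1) * Real.log (1 - s) - (1 / 2) * Real.log s) t
      = 1 / (t ^ 3 * (1 - t ^ 2)) := by
  obtain ⟨ht0, ht1n, ht2n, ht3n⟩ := nz t ht
  set Fw : ℝ → ℝ := fun s => -γ ^ 2 * Real.log (1 - s ^ 2) with hFw
  set Fs : ℝ → ℝ := fun s => -(2 * γ - 1) * Real.log (1 - s) - (1 / 2) * Real.log s with hFs
  -- first derivatives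
  have dw1 : deriv Fw t = 2*γ^2*t/(1-t^2) := (hw1 γ t ht).deriv
  have ds1 : deriv Fs t = (2*γ-1)/(1-t) - 1/(2*t) := (hs1 γ t ht).deriv
  -- second derivatives
  have ew1 : deriv Fw =ᶠ[nhds t] (fun s => 2*γ^2*s/(1-s^2)) := deriv_ev ht (hw1 γ)
  have es1 : deriv Fs =ᶠ[nhds t] (fun s => (2*γ-1)/(1-s) - 1/(2*s)) := deriv_ev ht (hs1 γ)
  have dw2 : iteratedDeriv 2 Fw t = 2*γ^2*(1+t^2)/(1-t^2)^2 := by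
    rw [iteratedDeriv_succ, iteratedDeriv_one, ew1.deriv_eq]
    exact (hw2 γ t ht).deriv
  have ds2 : iteratedDeriv 2 Fs t = (2*γ-1)/(1-t)^2 + 1/(2*t^2) := by
    rw [iteratedDeriv_succ, iteratedDeriv_one, es1.deriv_eq]
    exact (hs2 γ t ht).deriv
  -- third derivatives
  have ew2 : deriv (deriv Fw) =ᶠ[nhds t] (fun s => 2*γ^2*(1+s^2)/(1-s^2)^2) :=
    Filter.eventuallyEq_of_mem (isOpen_Ioo.mem_nhds ht) (fun s hs =>
      ((deriv_ev hs (hw1 γ)).deriv_eq).trans (hw2 γ s hs).deriv)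
  have es2 : deriv (deriv Fs) =ᶠ[nhds t] (fun s => (2*γ-1)/(1-s)^2 + 1/(2*s^2)) :=
    Filter.eventuallyEq_of_mem (isOpen_Ioo.mem_nhds ht) (fun s hs =>
      ((deriv_ev hs (hs1 γ)).deriv_eq).trans (hs2 γ s hs).deriv)
  have dw3 : iteratedDeriv 3 Fw t = 2*γ^2*(2*t*(3+t^2))/(1-t^2)^3 := by
    rw [show (3:ℕ) = 2 + 1 from rfl, iteratedDeriv_succ, iteratedDeriv_succ,
      iteratedDeriv_one, ew2.deriv_eq]
    exact (hw3 γ t ht).deriv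
  have ds3 : iteratedDeriv 3 Fs t = 2*(2*γ-1)/(1-t)^3 - 1/t^3 := by
    rw [show (3:ℕ) = 2 + 1 from rfl, iteratedDeriv_succ, iteratedDeriv_succ,
      iteratedDeriv_one, es2.deriv_eq]
    exact (hs3 γ t ht).deriv
  subst hc
  refine ⟨?_, ?_, ?_⟩
  · rw [dw1, ds1]; field_simp; ring
  · rw [dw2, ds2]; field_simp; ring
  · rw [dw3, ds3]; field_simp; ring
end

section
/- Fix γ > 0, and for 0 < t < 1 define F_w(t) = -γ² log(1 - t²) and F_s(t) = (2γ + 1) log(1 + t) - (1/2) log t. Then at every point t ∈ (0,1) with γ = (1-t)/(2t) one has F_w'(t) = F_s'(t) and F_w''(t) = F_s''(t), while F_w'''(t) - F_s'''(t) = 1 / ( t³ (1 - t²) ). -/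
open Set Filter

/-! Auxiliary derivative lemmas for the weak-coupling free energy. -/

private lemma hFw (γ s : ℝ) (hs : s ∈ Set.Ioo (0 : ℝ) 1) :
    HasDerivAt (fun s : ℝ => -γ ^ 2 * Real.log (1 - s ^ 2))
      (2 * γ ^ 2 * s / (1 - s ^ 2)) s := by
  obtain ⟨h0, h1⟩ := hs
  have hne : 1 - s ^ 2 ≠ 0 := by nlinarith
  have hinner : HasDerivAt (fun s : ℝ => 1 - s ^ 2) (-(2 * s)) s := by
    simpa using ((hasDerivAt_pow 2 s).const_sub 1)
  have h := ((Real.hasDerivAt_log hne).comp s hinner).const_mul (-γ ^ 2)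
  refine h.congr_deriv ?_
  field_simp

private lemma hW1 (γ s : ℝ) (hs : s ∈ Set.Ioo (0 : ℝ) 1) :
    HasDerivAt (fun s : ℝ => 2 * γ ^ 2 * s / (1 - s ^ 2))
      (2 * γ ^ 2 * (1 + s ^ 2) / (1 - s ^ 2) ^ 2) s := by
  obtain ⟨h0, h1⟩ := hs
  have hne : 1 - s ^ 2 ≠ 0 := by nlinarith
  have hinner : HasDerivAt (fun s : ℝ => 1 - s ^ 2) (-(2 * s)) s := by
    simpa using ((hasDerivAt_pow 2 s).const_sub 1)
  have hnum : HasDerivAt (fun s : ℝ => 2 * γ ^ 2 * s) (2 * γ ^ 2) s := by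
    simpa using (hasDerivAt_id s).const_mul (2 * γ ^ 2)
  have h := hnum.div hinner hne
  refine h.congr_deriv ?_
  field_simp
  ring

private lemma hW2 (γ s : ℝ) (hs : s ∈ Set.Ioo (0 : ℝ) 1) :
    HasDerivAt (fun s : ℝ => 2 * γ ^ 2 * (1 + s ^ 2) / (1 - s ^ 2) ^ 2)
      (4 * γ ^ 2 * s * (3 + s ^ 2) / (1 - s ^ 2) ^ 3) s := by
  obtain ⟨h0, h1⟩ := hs
  have hne : 1 - s ^ 2 ≠ 0 := by nlinarith
  have hne2 : (1 - s ^ 2) ^ 2 ≠ 0 := pow_ne_zero _ hne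
  have hinner : HasDerivAt (fun s : ℝ => 1 - s ^ 2) (-(2 * s)) s := by
    simpa using ((hasDerivAt_pow 2 s).const_sub 1)
  have hden : HasDerivAt (fun s : ℝ => (1 - s ^ 2) ^ 2)
      ((2 : ℕ) * (1 - s ^ 2) ^ 1 * (-(2 * s))) s := hinner.pow 2
  have hnum : HasDerivAt (fun s : ℝ => 2 * γ ^ 2 * (1 + s ^ 2)) (2 * γ ^ 2 * (2 * s)) s := by
    have : HasDerivAt (fun s : ℝ => 1 + s ^ 2) (2 * s) s := by
      simpa using ((hasDerivAt_pow 2 s).const_add 1)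
    simpa using this.const_mul (2 * γ ^ 2)
  have h := hnum.div hden hne2
  refine h.congr_deriv ?_
  field_simp
  ring

/-! Auxiliary derivative lemmas for the strong-coupling free energy. -/

private lemma hFs (γ s : ℝ) (hs : s ∈ Set.Ioo (0 : ℝ) 1) :
    HasDerivAt (fun s : ℝ => (2 * γ + 1) * Real.log (1 + s) - (1 / 2) * Real.log s)
      ((2 * γ + 1) / (1 + s) - 1 / (2 * s)) s := by
  obtain ⟨h0, h1⟩ := hs
  have hne : 1 + s ≠ 0 := by linarith
  have h1' : HasDerivAt (fun s : ℝ => 1 + s) (1 : ℝ) s := by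
    simpa using (hasDerivAt_id s).const_add 1
  have hA := ((Real.hasDerivAt_log hne).comp s h1').const_mul (2 * γ + 1)
  have hB := (Real.hasDerivAt_log h0.ne').const_mul (1 / 2 : ℝ)
  have h := hA.sub hB
  refine h.congr_deriv ?_
  field_simp

private lemma hS1 (γ s : ℝ) (hs : s ∈ Set.Ioo (0 : ℝ) 1) :
    HasDerivAt (fun s : ℝ => (2 * γ + 1) / (1 + s) - 1 / (2 * s))
      (1 / (2 * s ^ 2) - (2 * γ + 1) / (1 + s) ^ 2) s := by
  obtain ⟨h0, h1⟩ := hs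
  have hne : 1 + s ≠ 0 := by linarith
  have h1' : HasDerivAt (fun s : ℝ => 1 + s) (1 : ℝ) s := by
    simpa using (hasDerivAt_id s).const_add 1
  have h2 : HasDerivAt (fun s : ℝ => 2 * s) (2 : ℝ) s := by
    simpa using (hasDerivAt_id s).const_mul 2
  have hA := (hasDerivAt_const s (2 * γ + 1)).div h1' hne
  have hB := (hasDerivAt_const s (1 : ℝ)).div h2 (by positivity)
  have h := hA.sub hB
  refine h.congr_deriv ?_
  field_simp
  ring

private lemma hS2 (γ s : ℝ) (hs : s ∈ Set.Ioo (0 : ℝ) 1) :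
    HasDerivAt (fun s : ℝ => 1 / (2 * s ^ 2) - (2 * γ + 1) / (1 + s) ^ 2)
      (2 * (2 * γ + 1) / (1 + s) ^ 3 - 1 / s ^ 3) s := by
  obtain ⟨h0, h1⟩ := hs
  have hne : 1 + s ≠ 0 := by linarith
  have h1' : HasDerivAt (fun s : ℝ => 1 + s) (1 : ℝ) s := by
    simpa using (hasDerivAt_id s).const_add 1
  have hd1 : HasDerivAt (fun s : ℝ => (1 + s) ^ 2)
      ((2 : ℕ) * (1 + s) ^ 1 * 1) s := h1'.pow 2
  have hd2 : HasDerivAt (fun s : ℝ => 2 * s ^ 2) (2 * (2 * s)) s := by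
    simpa using (hasDerivAt_pow 2 s).const_mul 2
  have hA := (hasDerivAt_const s (1 : ℝ)).div hd2 (by positivity)
  have hB := (hasDerivAt_const s (2 * γ + 1)).div hd1 (by positivity)
  have h := hA.sub hB
  refine h.congr_deriv ?_
  field_simp
  ring

/-- Third-order phase transition of the symmetric E-model: across the critical curve
`γ = (1-t)/(2t)` the weak- and strong-coupling free energies agree to second order in `t`,
while the third `t`-derivatives jump by `1/(t³(1-t²))`. -/
theorem emodel_third_order_transition (γ : ℝ) (hγ : 0 < γ) (t : ℝ)
    (ht : t ∈ Set.Ioo (0 : ℝ) 1) (hc : γ = (1 - t) / (2 * t)) :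
    deriv (fun s : ℝ => -γ ^ 2 * Real.log (1 - s ^ 2)) t
        = deriv (fun s : ℝ => (2 * γ + 1) * Real.log (1 + s) - (1 / 2) * Real.log s) t
    ∧ iteratedDeriv 2 (fun s : ℝ => -γ ^ 2 * Real.log (1 - s ^ 2)) t
        = iteratedDeriv 2
            (fun s : ℝ => (2 * γ + 1) * Real.log (1 + s) - (1 / 2) * Real.log s) t
    ∧ iteratedDeriv 3 (fun s : ℝ => -γ ^ 2 * Real.log (1 - s ^ 2)) t
        - iteratedDeriv 3
            (fun s : ℝ => (2 * γ + 1) * Real.log (1 + s) - (1 / 2) * Real.log s) t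
      = 1 / (t ^ 3 * (1 - t ^ 2)) := by
  obtain ⟨h0, h1⟩ := ht
  have hmem : t ∈ Set.Ioo (0 : ℝ) 1 := ⟨h0, h1⟩
  have hnhds : Set.Ioo (0 : ℝ) 1 ∈ nhds t := Ioo_mem_nhds h0 h1
  set f : ℝ → ℝ := fun s => -γ ^ 2 * Real.log (1 - s ^ 2) with hf
  set g : ℝ → ℝ := fun s => (2 * γ + 1) * Real.log (1 + s) - (1 / 2) * Real.log s with hg
  -- first derivatives on the whole interval
  have hdf : ∀ s ∈ Set.Ioo (0 : ℝ) 1, deriv f s = 2 * γ ^ 2 * s / (1 - s ^ 2) :=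
    fun s hs => (hFw γ s hs).deriv
  have hdg : ∀ s ∈ Set.Ioo (0 : ℝ) 1, deriv g s = (2 * γ + 1) / (1 + s) - 1 / (2 * s) :=
    fun s hs => (hFs γ s hs).deriv
  -- second derivatives on the whole interval
  have hd2f : ∀ s ∈ Set.Ioo (0 : ℝ) 1,
      deriv (deriv f) s = 2 * γ ^ 2 * (1 + s ^ 2) / (1 - s ^ 2) ^ 2 := by
    intro s hs
    have heq : deriv f =ᶠ[nhds s] fun s => 2 * γ ^ 2 * s / (1 - s ^ 2) := by
      filter_upwards [Ioo_mem_nhds hs.1 hs.2] with x hx using hdf x hx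
    rw [heq.deriv_eq]
    exact (hW1 γ s hs).deriv
  have hd2g : ∀ s ∈ Set.Ioo (0 : ℝ) 1,
      deriv (deriv g) s = 1 / (2 * s ^ 2) - (2 * γ + 1) / (1 + s) ^ 2 := by
    intro s hs
    have heq : deriv g =ᶠ[nhds s] fun s => (2 * γ + 1) / (1 + s) - 1 / (2 * s) := by
      filter_upwards [Ioo_mem_nhds hs.1 hs.2] with x hx using hdg x hx
    rw [heq.deriv_eq]
    exact (hS1 γ s hs).deriv
  -- third derivatives at t
  have hd3f : deriv (deriv (deriv f)) t = 4 * γ ^ 2 * t * (3 + t ^ 2) / (1 - t ^ 2) ^ 3 := by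
    have heq : deriv (deriv f) =ᶠ[nhds t]
        fun s => 2 * γ ^ 2 * (1 + s ^ 2) / (1 - s ^ 2) ^ 2 := by
      filter_upwards [hnhds] with x hx using hd2f x hx
    rw [heq.deriv_eq]
    exact (hW2 γ t hmem).deriv
  have hd3g : deriv (deriv (deriv g)) t = 2 * (2 * γ + 1) / (1 + t) ^ 3 - 1 / t ^ 3 := by
    have heq : deriv (deriv g) =ᶠ[nhds t]
        fun s => 1 / (2 * s ^ 2) - (2 * γ + 1) / (1 + s) ^ 2 := by
      filter_upwards [hnhds] with x hx using hd2g x hx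
    rw [heq.deriv_eq]
    exact (hS2 γ t hmem).deriv
  -- rewrite iterated derivatives
  have hit2 : ∀ F : ℝ → ℝ, iteratedDeriv 2 F = deriv (deriv F) := by
    intro F
    rw [iteratedDeriv_succ, iteratedDeriv_one]
  have hit3 : ∀ F : ℝ → ℝ, iteratedDeriv 3 F = deriv (deriv (deriv F)) := by
    intro F
    rw [iteratedDeriv_succ, hit2]
  -- numeric facts at the critical point
  have ht0 : t ≠ 0 := h0.ne'
  have ht1 : (1 : ℝ) - t ≠ 0 := by linarith
  have ht1' : (1 : ℝ) + t ≠ 0 := by linarith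
  have hts : (1 : ℝ) - t ^ 2 ≠ 0 := by nlinarith
  subst hc
  refine ⟨?_, ?_, ?_⟩
  · rw [hdf t hmem, hdg t hmem]
    field_simp
    ring
  · rw [hit2, hit2, hd2f t hmem, hd2g t hmem]
    field_simp
    ring
  · rw [hit3, hit3, hd3f, hd3g]
    field_simp
    ring
end

section
/- Fix γ > 0 and a real number v with -1 < v < 1, and for 0 < t < 1 define ΔF_w(t) = γ² log(1 - t²) and ΔF_s(t) = log(1 - t) - (1/2) log t. Then at every point t ∈ (0,1) with γ = (1+t)/(2t) one has ΔF_w'(t) = ΔF_s'(t), while v² ( ΔF_w''(t) - ΔF_s''(t) ) = -v² / ( t² (1 - t) ). -/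
lemma hw_deriv (γ : ℝ) {s : ℝ} (hs : s ∈ Set.Ioo (0:ℝ) 1) :
    HasDerivAt (fun s : ℝ => γ ^ 2 * Real.log (1 - s ^ 2))
      (γ ^ 2 * (-2 * s) / (1 - s ^ 2)) s := by
  have h1 : (1 : ℝ) - s ^ 2 ≠ 0 := by nlinarith [hs.1, hs.2]
  have h : HasDerivAt (fun s : ℝ => 1 - s ^ 2) (-2 * s) s := by
    have := (hasDerivAt_pow 2 s).const_sub 1
    simpa using this
  have := (h.log h1).const_mul (γ ^ 2)
  refine this.congr_deriv ?_
  ring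

lemma hw_deriv2 (γ : ℝ) {s : ℝ} (hs : s ∈ Set.Ioo (0:ℝ) 1) :
    HasDerivAt (fun s : ℝ => γ ^ 2 * (-2 * s) / (1 - s ^ 2))
      (γ ^ 2 * (-2 - 2 * s ^ 2) / (1 - s ^ 2) ^ 2) s := by
  have h1 : (1 : ℝ) - s ^ 2 ≠ 0 := by nlinarith [hs.1, hs.2]
  have hu : HasDerivAt (fun s : ℝ => γ ^ 2 * (-2 * s)) (γ ^ 2 * (-2)) s := by
    have := ((hasDerivAt_id s).const_mul (-2 : ℝ)).const_mul (γ ^ 2)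
    simpa using this
  have hww : HasDerivAt (fun s : ℝ => 1 - s ^ 2) (-2 * s) s := by
    have := (hasDerivAt_pow 2 s).const_sub 1
    simpa using this
  have := hu.div hww h1
  refine this.congr_deriv ?_
  field_simp
  ring

lemma hst_deriv {s : ℝ} (hs : s ∈ Set.Ioo (0:ℝ) 1) :
    HasDerivAt (fun s : ℝ => Real.log (1 - s) - (1 / 2) * Real.log s)
      (-1 / (1 - s) - 1 / (2 * s)) s := by
  have h1 : (1 : ℝ) - s ≠ 0 := by nlinarith [hs.2]
  have hs0 : s ≠ 0 := ne_of_gt hs.1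
  have ha : HasDerivAt (fun s : ℝ => Real.log (1 - s)) (-1 / (1 - s)) s := by
    have h : HasDerivAt (fun s : ℝ => 1 - s) (-1 : ℝ) s := by
      simpa using (hasDerivAt_id s).const_sub 1
    simpa [div_eq_mul_inv] using h.log h1
  have hb : HasDerivAt (fun s : ℝ => (1 / 2 : ℝ) * Real.log s) (1 / (2 * s)) s := by
    have := (Real.hasDerivAt_log hs0).const_mul (1 / 2 : ℝ)
    refine this.congr_deriv ?_
    field_simp
  exact ha.sub hb

lemma hst_deriv2 {s : ℝ} (hs : s ∈ Set.Ioo (0:ℝ) 1) :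
    HasDerivAt (fun s : ℝ => -1 / (1 - s) - 1 / (2 * s))
      (-1 / (1 - s) ^ 2 + 1 / (2 * s ^ 2)) s := by
  have h1 : (1 : ℝ) - s ≠ 0 := by nlinarith [hs.2]
  have hs0 : s ≠ 0 := ne_of_gt hs.1
  have hs2 : (2 : ℝ) * s ≠ 0 := by positivity
  have ha : HasDerivAt (fun s : ℝ => (-1 : ℝ) / (1 - s)) (-1 / (1 - s) ^ 2) s := by
    have hw : HasDerivAt (fun s : ℝ => 1 - s) (-1 : ℝ) s := by
      simpa using (hasDerivAt_id s).const_sub 1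
    have := (hasDerivAt_const s (-1 : ℝ)).div hw h1
    refine this.congr_deriv ?_
    field_simp
    ring
  have hb : HasDerivAt (fun s : ℝ => (1 : ℝ) / (2 * s)) (-1 / (2 * s ^ 2)) s := by
    have hw : HasDerivAt (fun s : ℝ => 2 * s) (2 : ℝ) s := by
      simpa using (hasDerivAt_id s).const_mul (2 : ℝ)
    have := (hasDerivAt_const s (1 : ℝ)).div hw hs2
    refine this.congr_deriv ?_
    field_simp
    ring
  have := ha.sub hb
  refine this.congr_deriv ?_
  ring

/-- Second-order phase transition of the non-symmetric H-model: across the critical curve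
`γ = (1+t)/(2t)` the weak- and strong-coupling corrections `ΔF` to the free energy agree to
first order in `t`, while (weighted by `v²`) the second `t`-derivatives jump by
`-v²/(t²(1-t))`. -/
theorem hmodel_general_second_order_transition (γ v : ℝ) (hγ : 0 < γ)
    (hv1 : -1 < v) (hv2 : v < 1) (t : ℝ)
    (ht : t ∈ Set.Ioo (0 : ℝ) 1) (hc : γ = (1 + t) / (2 * t)) :
    deriv (fun s : ℝ => γ ^ 2 * Real.log (1 - s ^ 2)) t
        = deriv (fun s : ℝ => Real.log (1 - s) - (1 / 2) * Real.log s) t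
    ∧ v ^ 2 * (iteratedDeriv 2 (fun s : ℝ => γ ^ 2 * Real.log (1 - s ^ 2)) t
          - iteratedDeriv 2 (fun s : ℝ => Real.log (1 - s) - (1 / 2) * Real.log s) t)
      = -v ^ 2 / (t ^ 2 * (1 - t)) := by
  have ht0 : (0 : ℝ) < t := ht.1
  have ht1 : t < 1 := ht.2
  have h1t : (1 : ℝ) - t ≠ 0 := by nlinarith
  have h1t2 : (1 : ℝ) - t ^ 2 ≠ 0 := by nlinarith
  have htne : t ≠ 0 := ne_of_gt ht0
  -- first derivatives
  have d1w : deriv (fun s : ℝ => γ ^ 2 * Real.log (1 - s ^ 2)) t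
      = γ ^ 2 * (-2 * t) / (1 - t ^ 2) := (hw_deriv γ ht).deriv
  have d1s : deriv (fun s : ℝ => Real.log (1 - s) - (1 / 2) * Real.log s) t
      = -1 / (1 - t) - 1 / (2 * t) := (hst_deriv ht).deriv
  -- eventual equality of derivative functions on Ioo 0 1
  have hmem : Set.Ioo (0 : ℝ) 1 ∈ nhds t := isOpen_Ioo.mem_nhds ht
  have heqw : deriv (fun s : ℝ => γ ^ 2 * Real.log (1 - s ^ 2))
      =ᶠ[nhds t] fun s : ℝ => γ ^ 2 * (-2 * s) / (1 - s ^ 2) := by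
    filter_upwards [hmem] with s hs
    exact (hw_deriv γ hs).deriv
  have heqs : deriv (fun s : ℝ => Real.log (1 - s) - (1 / 2) * Real.log s)
      =ᶠ[nhds t] fun s : ℝ => -1 / (1 - s) - 1 / (2 * s) := by
    filter_upwards [hmem] with s hs
    exact (hst_deriv hs).deriv
  have d2w : iteratedDeriv 2 (fun s : ℝ => γ ^ 2 * Real.log (1 - s ^ 2)) t
      = γ ^ 2 * (-2 - 2 * t ^ 2) / (1 - t ^ 2) ^ 2 := by
    rw [show (2 : ℕ) = 1 + 1 from rfl, iteratedDeriv_succ, iteratedDeriv_one]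
    rw [heqw.deriv_eq]
    exact (hw_deriv2 γ ht).deriv
  have d2s : iteratedDeriv 2 (fun s : ℝ => Real.log (1 - s) - (1 / 2) * Real.log s) t
      = -1 / (1 - t) ^ 2 + 1 / (2 * t ^ 2) := by
    rw [show (2 : ℕ) = 1 + 1 from rfl, iteratedDeriv_succ, iteratedDeriv_one]
    rw [heqs.deriv_eq]
    exact (hst_deriv2 ht).deriv
  subst hc
  constructor
  · rw [d1w, d1s]
    field_simp
    ring
  · rw [d2w, d2s]
    field_simp
    ring
end

section
/- Fix γ > 0 and a real number v with -1 < v < 1, and for 0 < t < 1 define ΔF_w(t) = γ² log(1 - t²) and ΔF_s(t) = log(1 + t) - (1/2) log t. Then at every point t ∈ (0,1) with γ = (1-t)/(2t) one has ΔF_w'(t) = ΔF_s'(t), while v² ( ΔF_w''(t) - ΔF_s''(t) ) = -v² / ( t² (1 + t) ). -/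
private lemma hfd (γ s : ℝ) (h : 1 - s ^ 2 ≠ 0) :
    HasDerivAt (fun s : ℝ => γ ^ 2 * Real.log (1 - s ^ 2))
      (γ ^ 2 * (-(2 * s) / (1 - s ^ 2))) s := by
  have h1 : HasDerivAt (fun s : ℝ => 1 - s ^ 2) (-(2 * s)) s := by
    simpa using ((hasDerivAt_pow 2 s).const_sub 1)
  exact (h1.log h).const_mul _

private lemma hgd (s : ℝ) (hs : s ≠ 0) (hs1 : (1 : ℝ) + s ≠ 0) :
    HasDerivAt (fun s : ℝ => Real.log (1 + s) - (1 / 2) * Real.log s)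
      ((1 + s)⁻¹ - (1 / 2) * s⁻¹) s := by
  have h2 : HasDerivAt (fun s : ℝ => 1 + s) 1 s := (hasDerivAt_id s).const_add 1
  have h3 := (h2.log hs1).fun_sub ((Real.hasDerivAt_log hs).const_mul (1 / 2 : ℝ))
  simpa using h3

private lemma hfd2 (γ s : ℝ) (h : 1 - s ^ 2 ≠ 0) :
    HasDerivAt (fun s : ℝ => γ ^ 2 * (-(2 * s) / (1 - s ^ 2)))
      (γ ^ 2 * ((-2 * (1 - s ^ 2) - -(2 * s) * -(2 * s)) / (1 - s ^ 2) ^ 2)) s := by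
  have h1 : HasDerivAt (fun s : ℝ => 1 - s ^ 2) (-(2 * s)) s := by
    simpa using ((hasDerivAt_pow 2 s).const_sub 1)
  have h2 : HasDerivAt (fun s : ℝ => -(2 * s)) (-2) s := by
    simpa using ((hasDerivAt_id s).const_mul (2 : ℝ)).fun_neg
  exact (h2.div h1 h).const_mul _

private lemma hgd2 (s : ℝ) (hs : s ≠ 0) (hs1 : (1 : ℝ) + s ≠ 0) :
    HasDerivAt (fun s : ℝ => (1 + s)⁻¹ - (1 / 2) * s⁻¹)
      (-1 / (1 + s) ^ 2 - (1 / 2) * (-(s ^ 2)⁻¹)) s := by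
  have h2 : HasDerivAt (fun s : ℝ => 1 + s) 1 s := (hasDerivAt_id s).const_add 1
  exact (h2.inv hs1).sub ((hasDerivAt_inv hs).const_mul (1 / 2 : ℝ))

/-- Second-order phase transition of the non-symmetric E-model: across the critical curve
`γ = (1-t)/(2t)` the weak- and strong-coupling corrections `ΔF` to the free energy agree to
first order in `t`, while (weighted by `v²`) the second `t`-derivatives jump by
`-v²/(t²(1+t))`. -/
theorem emodel_general_second_order_transition (γ v : ℝ) (hγ : 0 < γ)
    (hv1 : -1 < v) (hv2 : v < 1) (t : ℝ)
    (ht : t ∈ Set.Ioo (0 : ℝ) 1) (hc : γ = (1 - t) / (2 * t)) :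
    deriv (fun s : ℝ => γ ^ 2 * Real.log (1 - s ^ 2)) t
        = deriv (fun s : ℝ => Real.log (1 + s) - (1 / 2) * Real.log s) t
    ∧ v ^ 2 * (iteratedDeriv 2 (fun s : ℝ => γ ^ 2 * Real.log (1 - s ^ 2)) t
          - iteratedDeriv 2 (fun s : ℝ => Real.log (1 + s) - (1 / 2) * Real.log s) t)
      = -v ^ 2 / (t ^ 2 * (1 + t)) := by
  obtain ⟨ht0, ht1⟩ := ht
  have h2t : (1 : ℝ) - t ^ 2 ≠ 0 := by nlinarith
  have hts : t ≠ 0 := ne_of_gt ht0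
  have h1t : (1 : ℝ) + t ≠ 0 := by linarith
  have h1mt : (1 : ℝ) - t ≠ 0 := by linarith
  have hev1 : deriv (fun s : ℝ => γ ^ 2 * Real.log (1 - s ^ 2))
      =ᶠ[nhds t] fun s => γ ^ 2 * (-(2 * s) / (1 - s ^ 2)) := by
    filter_upwards [Ioo_mem_nhds ht0 ht1] with s hs
    exact (hfd γ s (by nlinarith [hs.1, hs.2])).deriv
  have hev2 : deriv (fun s : ℝ => Real.log (1 + s) - (1 / 2) * Real.log s)
      =ᶠ[nhds t] fun s => (1 + s)⁻¹ - (1 / 2) * s⁻¹ := by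
    filter_upwards [Ioo_mem_nhds ht0 ht1] with s hs
    exact (hgd s (ne_of_gt hs.1) (by linarith [hs.1])).deriv
  constructor
  · rw [(hfd γ t h2t).deriv, (hgd t hts h1t).deriv, hc]
    field_simp
    ring
  · rw [iteratedDeriv_succ, iteratedDeriv_one, iteratedDeriv_succ, iteratedDeriv_one,
      hev1.deriv_eq, hev2.deriv_eq, (hfd2 γ t h2t).deriv, (hgd2 t hts h1t).deriv, hc]
    have h2t' : ((1:ℝ) - t^2) = (1-t)*(1+t) := by ring
    field_simp
    ring
end

section
/- Let 0 < t < 1 and γ > (1+t)/(2t), let φ₀ ∈ (0, π) satisfy sin²(φ₀/2) = (1-t)²(2γ-1) / (4t(γ-1)²), and define the strong-coupling density ρ_H(φ) = (2(γ-1)t/π) · [ cos(φ/2) / ( (1-t)² + 4t sin²(φ/2) ) ] · √( sin²(φ₀/2) - sin²(φ/2) ) on [-φ₀, φ₀]. Then ∫_{-φ₀}^{φ₀} ρ_H(φ) · [ 2 (cos φ - t) / ( 1 + t² - 2t cos φ ) ] dφ = ( 4γt - 1 - t ) / ( 2γt(1 - t) ). -/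
open Real

lemma hasDerivAt_hmodel_G (a c R B : ℝ) (ha : 0 < a) (hc : 0 < c) (hR : 0 < R)
    (hR2 : R ^ 2 = a ^ 2 + c ^ 2) {s : ℝ} (hs : s ^ 2 < c ^ 2) :
    HasDerivAt (fun x : ℝ =>
        (B * c ^ 2 / (2 * a ^ 3 * R) - 2 * R / a) *
            Real.arcsin (x * R / (c * Real.sqrt (a ^ 2 + x ^ 2))) +
          2 * Real.arcsin (x / c) +
          B / (2 * a ^ 2) * (x * Real.sqrt (c ^ 2 - x ^ 2) / (a ^ 2 + x ^ 2)))
      ((B - 2 * (a ^ 2 + s ^ 2)) * Real.sqrt (c ^ 2 - s ^ 2) / (a ^ 2 + s ^ 2) ^ 2) s := by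
  have hA0 : (0:ℝ) < a ^ 2 + s ^ 2 := by positivity
  have hApos : 0 < Real.sqrt (a ^ 2 + s ^ 2) := Real.sqrt_pos.2 hA0
  set A := Real.sqrt (a ^ 2 + s ^ 2) with hAdef
  have hA2 : A ^ 2 = a ^ 2 + s ^ 2 := Real.sq_sqrt hA0.le
  have hcs : (0:ℝ) < c ^ 2 - s ^ 2 := by linarith
  have hSpos : 0 < Real.sqrt (c ^ 2 - s ^ 2) := Real.sqrt_pos.2 hcs
  set S := Real.sqrt (c ^ 2 - s ^ 2) with hSdef
  have hS2 : S ^ 2 = c ^ 2 - s ^ 2 := Real.sq_sqrt hcs.le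
  -- derivative of sqrt(a^2+x^2)
  have hpoly : HasDerivAt (fun x : ℝ => a ^ 2 + x ^ 2) (2 * s) s := by
    simpa using (hasDerivAt_pow 2 s).const_add (a ^ 2)
  have hsq : HasDerivAt (fun x : ℝ => Real.sqrt (a ^ 2 + x ^ 2)) (s / A) s := by
    have h2 := (Real.hasDerivAt_sqrt hA0.ne').comp s hpoly
    refine h2.congr_deriv (Eq.symm ?_)
    rw [← hAdef]
    field_simp
  -- the quotient inside arcsin
  have hdenne : c * A ≠ 0 := by positivity
  have hquot : HasDerivAt (fun x : ℝ => x * R / (c * Real.sqrt (a ^ 2 + x ^ 2)))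
      (R * a ^ 2 / (c * A ^ 3)) s := by
    have hnum : HasDerivAt (fun x : ℝ => x * R) R s := by
      simpa using (hasDerivAt_id s).mul_const R
    have hden : HasDerivAt (fun x : ℝ => c * Real.sqrt (a ^ 2 + x ^ 2)) (c * (s / A)) s :=
      hsq.const_mul c
    have h := hnum.div hden (by rw [← hAdef]; exact hdenne)
    refine h.congr_deriv (Eq.symm ?_)
    rw [← hAdef]
    have hA3 : A ^ 3 = (a ^ 2 + s ^ 2) * A := by rw [← hA2]; ring
    field_simp
    linear_combination (-1 : ℝ) * hA2
  -- bounds for arcsin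
  have hu2 : (s * R / (c * A)) ^ 2 < 1 := by
    rw [div_pow, div_lt_one (by positivity)]
    have key : (c * A) ^ 2 - (s * R) ^ 2 = a ^ 2 * (c ^ 2 - s ^ 2) := by
      rw [mul_pow, mul_pow, hA2, hR2]; ring
    nlinarith [mul_pos (mul_pos ha ha) hcs]
  have hu1 : s * R / (c * A) ≠ 1 := by intro h; rw [h] at hu2; norm_num at hu2
  have hum : s * R / (c * A) ≠ -1 := by intro h; rw [h] at hu2; norm_num at hu2
  have hsimp : Real.sqrt (1 - (s * R / (c * A)) ^ 2) = a * S / (c * A) := by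
    rw [show 1 - (s * R / (c * A)) ^ 2 = (a * S / (c * A)) ^ 2 from ?_,
      Real.sqrt_sq (by positivity)]
    field_simp
    linear_combination (c^2) * hA2 - (s^2) * hR2 - (a^2) * hS2
  have H1 : HasDerivAt (fun x : ℝ =>
      Real.arcsin (x * R / (c * Real.sqrt (a ^ 2 + x ^ 2))))
      (a * R / (S * (a ^ 2 + s ^ 2))) s := by
    have h := (Real.hasDerivAt_arcsin hum hu1).comp s hquot
    refine h.congr_deriv (Eq.symm ?_)
    rw [hsimp, ← hA2]
    field_simp
  -- second arcsin
  have hv2 : (s / c) ^ 2 < 1 := by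
    rw [div_pow, div_lt_one (by positivity)]; linarith
  have hv1 : s / c ≠ 1 := by intro h; rw [h] at hv2; norm_num at hv2
  have hvm : s / c ≠ -1 := by intro h; rw [h] at hv2; norm_num at hv2
  have hsimp2 : Real.sqrt (1 - (s / c) ^ 2) = S / c := by
    rw [show 1 - (s / c) ^ 2 = (S / c) ^ 2 from ?_, Real.sqrt_sq (by positivity)]
    field_simp
    linear_combination - hS2
  have H2 : HasDerivAt (fun x : ℝ => Real.arcsin (x / c)) (1 / S) s := by
    have h := (Real.hasDerivAt_arcsin hvm hv1).comp s ((hasDerivAt_id s).div_const c)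
    refine h.congr_deriv (Eq.symm ?_)
    rw [hsimp2]
    field_simp
  -- third term
  have hsqrt2 : HasDerivAt (fun x : ℝ => Real.sqrt (c ^ 2 - x ^ 2)) (-s / S) s := by
    have hp : HasDerivAt (fun x : ℝ => c ^ 2 - x ^ 2) (-(2 * s)) s := by
      simpa using ((hasDerivAt_pow 2 s).const_sub (c ^ 2))
    have h := (Real.hasDerivAt_sqrt hcs.ne').comp s hp
    refine h.congr_deriv (Eq.symm ?_)
    rw [← hSdef]
    field_simp
  have H3 : HasDerivAt (fun x : ℝ => x * Real.sqrt (c ^ 2 - x ^ 2) / (a ^ 2 + x ^ 2))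
      ((a ^ 2 * c ^ 2 - c ^ 2 * s ^ 2 - 2 * a ^ 2 * s ^ 2) / (S * (a ^ 2 + s ^ 2) ^ 2)) s := by
    have hprod : HasDerivAt (fun x : ℝ => x * Real.sqrt (c ^ 2 - x ^ 2))
        (1 * S + s * (-s / S)) s := by
      have := (hasDerivAt_id' s).mul hsqrt2
      exact this
    have h := hprod.div hpoly hA0.ne'
    refine h.congr_deriv (Eq.symm ?_)
    rw [← hSdef]
    field_simp
    linear_combination (s ^ 2 - a ^ 2) * hS2
  -- assemble
  have hG := ((H1.const_mul (B * c ^ 2 / (2 * a ^ 3 * R) - 2 * R / a)).add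
      (H2.const_mul 2)).add (H3.const_mul (B / (2 * a ^ 2)))
  refine hG.congr_deriv (Eq.symm ?_)
  have key1 : (B * c ^ 2 / (2 * a ^ 3 * R) - 2 * R / a) * (a * R / (S * (a ^ 2 + s ^ 2)))
      = (B * c ^ 2 - 4 * a ^ 2 * (a ^ 2 + c ^ 2)) / (2 * a ^ 2 * S * (a ^ 2 + s ^ 2)) := by
    field_simp
    linear_combination (-4 * a ^ 2) * hR2
  rw [key1]
  field_simp
  linear_combination (2 * a ^ 2 * (B - 2 * (a ^ 2 + s ^ 2))) * hS2

set_option maxHeartbeats 1000000 in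
/-- Integral of the kernel `2(cos φ - t)/(1 + t² - 2t cos φ)` against the gapped
eigenvalue density of the symmetric H-model: it equals `(4γt - 1 - t)/(2γt(1-t))`. -/
theorem hmodel_strong_coupling_free_energy_integral (t γ φ₀ : ℝ)
    (ht0 : 0 < t) (ht1 : t < 1) (hγ : (1 + t) / (2 * t) < γ)
    (hφ : φ₀ ∈ Set.Ioo 0 Real.pi)
    (hφ0 : Real.sin (φ₀ / 2) ^ 2 = (1 - t) ^ 2 * (2 * γ - 1) / (4 * t * (γ - 1) ^ 2)) :
    (∫ φ in (-φ₀)..φ₀,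
        ((2 * (γ - 1) * t / Real.pi) *
            (Real.cos (φ / 2) / ((1 - t) ^ 2 + 4 * t * Real.sin (φ / 2) ^ 2)) *
            Real.sqrt (Real.sin (φ₀ / 2) ^ 2 - Real.sin (φ / 2) ^ 2)) *
          (2 * (Real.cos φ - t) / (1 + t ^ 2 - 2 * t * Real.cos φ)))
      = (4 * γ * t - 1 - t) / (2 * γ * t * (1 - t)) := by
  obtain ⟨hφ1, hφ2⟩ := hφ
  have hπ : (0:ℝ) < Real.pi := Real.pi_pos
  have hγ1 : 1 < γ := by
    have h1 : (1:ℝ) < (1 + t) / (2 * t) := by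
      rw [lt_div_iff₀ (by linarith)]; linarith
    linarith
  have hγne : γ - 1 ≠ 0 := by intro h; nlinarith
  set st := Real.sqrt t with hstdef
  have hstpos : 0 < st := Real.sqrt_pos.2 ht0
  have hstne : st ≠ 0 := hstpos.ne'
  have hst : st ^ 2 = t := Real.sq_sqrt ht0.le
  set c := Real.sin (φ₀ / 2) with hcdef
  have hcpos : 0 < c := by
    rw [hcdef]
    exact Real.sin_pos_of_pos_of_lt_pi (by linarith) (by linarith)
  set a := (1 - t) / (2 * st) with hadef
  have ha : 0 < a := div_pos (by linarith) (by linarith)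
  set R := γ * (1 - t) / (2 * st * (γ - 1)) with hRdef
  have hRpos : 0 < R := div_pos (by nlinarith) (by nlinarith)
  have hR2 : R ^ 2 = a ^ 2 + c ^ 2 := by
    rw [hRdef, hadef, hφ0, ← hst]
    field_simp
    ring
  set B := (1 - t) * (1 + t) / (2 * t) with hBdef
  set K := (γ - 1) / (2 * Real.pi * t) with hKdef
  -- half-angle rewriting of the cosine
  have hcosx : ∀ y : ℝ, Real.cos y = 1 - 2 * Real.sin (y / 2) ^ 2 := by
    intro y
    have h1 := Real.cos_two_mul' (y / 2)
    rw [show 2 * (y / 2) = y by ring] at h1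
    have h2 := Real.sin_sq_add_cos_sq (y / 2)
    linarith
  -- positivity of denominators
  have hden1 : ∀ x : ℝ, ((1 - t) ^ 2 + 4 * t * Real.sin (x / 2) ^ 2) ≠ 0 := by
    intro x
    have h1 : (0:ℝ) < (1 - t) ^ 2 := by nlinarith
    nlinarith [mul_nonneg (mul_nonneg (by norm_num : (0:ℝ) ≤ 4) ht0.le)
      (sq_nonneg (Real.sin (x / 2)))]
  have hden2 : ∀ x : ℝ, (1 + t ^ 2 - 2 * t * Real.cos x) ≠ 0 := by
    intro x
    have h1 := hcosx x
    have := hden1 x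
    intro h
    apply this
    nlinarith
  have hden3 : ∀ x : ℝ, a ^ 2 + Real.sin (x / 2) ^ 2 ≠ 0 := fun x =>
    (add_pos_of_pos_of_nonneg (pow_pos ha 2) (sq_nonneg _)).ne'
  have hsin2 : Continuous fun x : ℝ => Real.sin (x / 2) :=
    Real.continuous_sin.comp (continuous_id.div_const 2)
  have hcos2 : Continuous fun x : ℝ => Real.cos (x / 2) :=
    Real.continuous_cos.comp (continuous_id.div_const 2)
  -- continuity of the integrand
  have hfcont : Continuous fun x : ℝ =>
      ((2 * (γ - 1) * t / Real.pi) *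
          (Real.cos (x / 2) / ((1 - t) ^ 2 + 4 * t * Real.sin (x / 2) ^ 2)) *
          Real.sqrt (c ^ 2 - Real.sin (x / 2) ^ 2)) *
        (2 * (Real.cos x - t) / (1 + t ^ 2 - 2 * t * Real.cos x)) := by
    apply Continuous.mul
    · apply Continuous.mul
      · exact continuous_const.mul (hcos2.div
          (continuous_const.add (continuous_const.mul (hsin2.pow 2))) hden1)
      · exact Real.continuous_sqrt.comp (continuous_const.sub (hsin2.pow 2))
    · exact (continuous_const.mul (Real.continuous_cos.sub continuous_const)).div
        (continuous_const.sub (continuous_const.mul Real.continuous_cos)) hden2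
  -- continuity of the antiderivative
  have hFcont : Continuous fun x : ℝ => K *
      ((B * c ^ 2 / (2 * a ^ 3 * R) - 2 * R / a) *
          Real.arcsin (Real.sin (x / 2) * R /
            (c * Real.sqrt (a ^ 2 + Real.sin (x / 2) ^ 2))) +
        2 * Real.arcsin (Real.sin (x / 2) / c) +
        B / (2 * a ^ 2) * (Real.sin (x / 2) * Real.sqrt (c ^ 2 - Real.sin (x / 2) ^ 2) /
          (a ^ 2 + Real.sin (x / 2) ^ 2))) := by
    refine continuous_const.mul ?_
    refine Continuous.add (Continuous.add ?_ ?_) ?_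
    · refine continuous_const.mul (Real.continuous_arcsin.comp ?_)
      refine (hsin2.mul continuous_const).div
        (continuous_const.mul (Real.continuous_sqrt.comp
          (continuous_const.add (hsin2.pow 2)))) ?_
      intro x
      have h1 : 0 < a ^ 2 + Real.sin (x / 2) ^ 2 :=
        add_pos_of_pos_of_nonneg (pow_pos ha 2) (sq_nonneg _)
      exact (mul_pos hcpos (Real.sqrt_pos.2 h1)).ne'
    · exact continuous_const.mul (Real.continuous_arcsin.comp (hsin2.div_const c))
    · exact continuous_const.mul ((hsin2.mul (Real.continuous_sqrt.comp
        (continuous_const.sub (hsin2.pow 2)))).div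
        (continuous_const.add (hsin2.pow 2)) hden3)
  -- derivative on the open interval
  have hderiv : ∀ x ∈ Set.Ioo (-φ₀) φ₀, HasDerivAt (fun x : ℝ => K *
      ((B * c ^ 2 / (2 * a ^ 3 * R) - 2 * R / a) *
          Real.arcsin (Real.sin (x / 2) * R /
            (c * Real.sqrt (a ^ 2 + Real.sin (x / 2) ^ 2))) +
        2 * Real.arcsin (Real.sin (x / 2) / c) +
        B / (2 * a ^ 2) * (Real.sin (x / 2) * Real.sqrt (c ^ 2 - Real.sin (x / 2) ^ 2) /
          (a ^ 2 + Real.sin (x / 2) ^ 2))))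
      (((2 * (γ - 1) * t / Real.pi) *
          (Real.cos (x / 2) / ((1 - t) ^ 2 + 4 * t * Real.sin (x / 2) ^ 2)) *
          Real.sqrt (c ^ 2 - Real.sin (x / 2) ^ 2)) *
        (2 * (Real.cos x - t) / (1 + t ^ 2 - 2 * t * Real.cos x))) x := by
    intro x hx
    obtain ⟨hx1, hx2⟩ := hx
    have hs2 : Real.sin (x / 2) ^ 2 < c ^ 2 := by
      have hm1 : x / 2 ∈ Set.Icc (-(Real.pi / 2)) (Real.pi / 2) :=
        ⟨by linarith, by linarith⟩
      have hm2 : φ₀ / 2 ∈ Set.Icc (-(Real.pi / 2)) (Real.pi / 2) :=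
        ⟨by linarith, by linarith⟩
      have hm3 : -(φ₀ / 2) ∈ Set.Icc (-(Real.pi / 2)) (Real.pi / 2) :=
        ⟨by linarith, by linarith⟩
      have hlt1 : Real.sin (x / 2) < c :=
        Real.strictMonoOn_sin hm1 hm2 (by linarith)
      have hlt2 : -c < Real.sin (x / 2) := by
        have h := Real.strictMonoOn_sin hm3 hm1 (by linarith)
        rwa [Real.sin_neg, ← hcdef] at h
      exact sq_lt_sq' hlt2 hlt1
    have hsin : HasDerivAt (fun y : ℝ => Real.sin (y / 2)) (Real.cos (x / 2) * (1 / 2)) x :=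
      (Real.hasDerivAt_sin (x / 2)).comp (h := fun y : ℝ => y / 2) x ((hasDerivAt_id' x).div_const 2)
    have hG := hasDerivAt_hmodel_G a c R B ha hcpos hRpos hR2 hs2
    have hF := (hG.comp x hsin).const_mul K
    refine hF.congr_deriv (Eq.symm ?_)
    have hD2eq : 1 + t ^ 2 - 2 * t * Real.cos x
        = (1 - t) ^ 2 + 4 * t * Real.sin (x / 2) ^ 2 := by
      rw [hcosx x]; ring
    have ha2 : a ^ 2 = (1 - t) ^ 2 / (4 * t) := by
      rw [hadef, div_pow, mul_pow, hst]; norm_num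
    have hDne := hden1 x
    have hsum : a ^ 2 + Real.sin (x / 2) ^ 2
        = ((1 - t) ^ 2 + 4 * t * Real.sin (x / 2) ^ 2) / (4 * t) := by
      rw [ha2]; field_simp
    rw [hD2eq, hcosx x, hKdef, hBdef, hsum]
    set D := (1 - t) ^ 2 + 4 * t * Real.sin (x / 2) ^ 2 with hDdef
    field_simp
    ring
  -- fundamental theorem of calculus
  have key := intervalIntegral.integral_eq_sub_of_hasDeriv_right_of_le
    (by linarith : -φ₀ ≤ φ₀) hFcont.continuousOn
    (fun x hx => (hderiv x hx).hasDerivWithinAt)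
    (hfcont.intervalIntegrable _ _)
  rw [key]
  -- evaluation at the endpoints
  have hsqrtR : Real.sqrt (a ^ 2 + c ^ 2) = R := by
    rw [← hR2, Real.sqrt_sq hRpos.le]
  have hcR : c * R / (c * R) = 1 := div_self (mul_pos hcpos hRpos).ne'
  have hcc : c / c = 1 := div_self hcpos.ne'
  have hneg : Real.sin (-φ₀ / 2) = -c := by
    rw [show -φ₀ / 2 = -(φ₀ / 2) by ring, Real.sin_neg, ← hcdef]
  beta_reduce
  rw [hneg, ← hcdef]
  simp only [neg_sq, hsqrtR, sub_self, Real.sqrt_zero, mul_zero, zero_div,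
    neg_mul, neg_div, hcR, hcc, Real.arcsin_one, Real.arcsin_neg, Real.arcsin_one]
  have h1t : (1:ℝ) - t ≠ 0 := by linarith
  have hγ0 : γ ≠ 0 := by linarith
  have hv1 : B * c ^ 2 / (2 * a ^ 3 * R)
      = (1 + t) * (2 * γ - 1) / ((1 - t) * (γ - 1) * γ) := by
    rw [hBdef, hadef, hRdef, hφ0, ← hst]
    have h1t' : (1:ℝ) - st ^ 2 ≠ 0 := by rw [hst]; exact h1t
    field_simp
    ring
  have hv2 : 2 * R / a = 2 * γ / (γ - 1) := by
    rw [hadef, hRdef]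
    field_simp
  rw [hv1, hv2, hKdef]
  field_simp
  ring
end
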